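/- arXiv:1809.01256 — 4 statements merged into one kernel-verified Lean document; each statement's English description precedes it below -/
import Mathlib

section
/- Let 0 < α < n, y₀ ∈ ℝ^n, r > 0, and 0 < β < n. For f(y) = χ_{B(y₀,r)}(y) · |y − y₀|^{−β}, and A an invertible n×n matrix with M = ‖A‖, for every x ∈ B(Ay₀, Mr) the integral T_A f(x) = ∫ |x − Ay|^{−(n−α)} f(y) dy satisfies T_A f(x) ≥ c · |x − Ay₀|^{−(β−α)} for some constant c > 0 depending only on n, α, β, M. -/
open MeasureTheory Metric ENNReal

private lemma lb_aux {E : Type*} [MeasurableSpace E] (μ : Measure E)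
    (g : E → ℝ≥0∞) (S : Set E) (hS : MeasurableSet S) (C : ℝ≥0∞)
    (h : ∀ y ∈ S, C ≤ g y) : C * μ S ≤ ∫⁻ y, g y ∂μ :=
  calc C * μ S = ∫⁻ _ in S, C ∂μ := (setLIntegral_const S C).symm
    _ ≤ ∫⁻ y in S, g y ∂μ := setLIntegral_mono' hS h
    _ ≤ ∫⁻ y, g y ∂μ := setLIntegral_le_lintegral S g

/-- lower bound `T_A f(x) ≥ c |x − Ay₀|^{−(β−α)}` on `B(Ay₀, Mr)` for
`f = χ_{B(y₀,r)} |·−y₀|^{−β}`. -/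
theorem stmt3 {n : ℕ} (hn : 0 < n) (α β r : ℝ)
    (hα : 0 < α) (hαn : α < n) (hβ : 0 < β) (hβn : β < n) (hr : 0 < r)
    (A : EuclideanSpace ℝ (Fin n) ≃L[ℝ] EuclideanSpace ℝ (Fin n))
    (y₀ : EuclideanSpace ℝ (Fin n)) :
    ∃ c : ℝ, 0 < c ∧
      ∀ x ∈ ball (A y₀) (‖(A : EuclideanSpace ℝ (Fin n) →L[ℝ] EuclideanSpace ℝ (Fin n))‖ * r),
        ENNReal.ofReal (c * ‖x - A y₀‖ ^ (-(β - α))) ≤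
          ∫⁻ y, ENNReal.ofReal (‖x - A y‖ ^ (-((n : ℝ) - α)) *
            Set.indicator (ball y₀ r) (fun y => ‖y - y₀‖ ^ (-β)) y) := by
  classical
  haveI : Nonempty (Fin n) := ⟨⟨0, hn⟩⟩
  set A' := (A : EuclideanSpace ℝ (Fin n) →L[ℝ] EuclideanSpace ℝ (Fin n)) with hA'
  set M := ‖A'‖ with hMdef
  have hM : 0 < M := by
    set v := EuclideanSpace.single (⟨0, hn⟩ : Fin n) (1 : ℝ) with hv
    have hv0 : v ≠ 0 := by
      intro h
      have h1 := congrArg (fun z : EuclideanSpace ℝ (Fin n) => z ⟨0, hn⟩) h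
      simp [hv, EuclideanSpace.single_apply] at h1
    have h1 : 0 < ‖A' v‖ := by
      rw [norm_pos_iff]
      intro h
      have h' : A v = 0 := h
      exact hv0 (by simpa using congrArg A.symm h')
    have h2 : ‖A' v‖ ≤ M * ‖v‖ := A'.le_opNorm v
    nlinarith [norm_nonneg v]
  set e : ℝ := -((n : ℝ) - α) with he
  have he_nonpos : e ≤ 0 := by rw [he]; nlinarith
  set ω := (volume (ball (0 : EuclideanSpace ℝ (Fin n)) 1)).toReal with hω
  have hω_pos : 0 < ω :=
    ENNReal.toReal_pos (measure_ball_pos volume 0 one_pos).ne' measure_ball_lt_top.ne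
  set S₀ := ball y₀ r \ closedBall y₀ (r / 2) with hS₀def
  have hS₀meas : MeasurableSet S₀ := measurableSet_ball.diff measurableSet_closedBall
  have hS₀fin : volume S₀ < ⊤ :=
    (measure_mono Set.diff_subset).trans_lt measure_ball_lt_top
  have hS₀pos : 0 < (volume S₀).toReal := by
    refine ENNReal.toReal_pos ?_ hS₀fin.ne
    refine ((isOpen_ball.sdiff isClosed_closedBall).measure_pos volume ?_).ne'
    refine ⟨y₀ + EuclideanSpace.single (⟨0, hn⟩ : Fin n) (3 * r / 4), ?_, ?_⟩
    · rw [mem_ball, dist_eq_norm, add_sub_cancel_left, EuclideanSpace.norm_single,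
        Real.norm_eq_abs, abs_of_pos (by linarith)]
      linarith
    · rw [mem_closedBall, dist_eq_norm, add_sub_cancel_left, EuclideanSpace.norm_single,
        Real.norm_eq_abs, abs_of_pos (by linarith)]
      push_neg
      linarith
  set c₁ := (2 : ℝ) ^ e * M ^ (β - (n : ℝ)) * ω with hc₁def
  set c₂ := (M * r) ^ e * r ^ (-β) * (volume S₀).toReal with hc₂def
  have hc₁ : 0 < c₁ :=
    mul_pos (mul_pos (Real.rpow_pos_of_pos two_pos e) (Real.rpow_pos_of_pos hM _)) hω_pos
  have hc₂ : 0 < c₂ :=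
    mul_pos (mul_pos (Real.rpow_pos_of_pos (mul_pos hM hr) e) (Real.rpow_pos_of_pos hr _)) hS₀pos
  refine ⟨min c₁ c₂, lt_min hc₁ hc₂, ?_⟩
  intro x hx
  rw [mem_ball, dist_eq_norm] at hx
  rcases eq_or_ne x (A y₀) with hxe | hxe
  · -- x = A y₀
    subst hxe
    by_cases hβα : β = α
    · -- β = α : exponent is 0
      have h0 : -(β - α) = 0 := by rw [hβα]; ring
      rw [h0, Real.rpow_zero, mul_one]
      have hpt : ∀ y ∈ S₀,
          ENNReal.ofReal ((M * r) ^ e * r ^ (-β)) ≤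
            ENNReal.ofReal (‖A y₀ - A y‖ ^ e *
              Set.indicator (ball y₀ r) (fun y => ‖y - y₀‖ ^ (-β)) y) := by
        intro y hy
        obtain ⟨hy1, hy2⟩ := hy
        rw [mem_ball, dist_eq_norm] at hy1
        rw [mem_closedBall, dist_eq_norm] at hy2
        push_neg at hy2
        have hyy : 0 < ‖y - y₀‖ := by linarith
        have hy0 : y ≠ y₀ := by
          intro h; rw [h, sub_self, norm_zero] at hyy; exact lt_irrefl 0 hyy
        have hxA : 0 < ‖A y₀ - A y‖ := by
          rw [norm_pos_iff, sub_ne_zero]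
          exact fun h => hy0 (A.injective h.symm)
        have hb1 : ‖A y₀ - A y‖ ≤ M * r := by
          calc ‖A y₀ - A y‖ = ‖A' (y₀ - y)‖ := by rw [map_sub]; rfl
            _ ≤ M * ‖y₀ - y‖ := A'.le_opNorm _
            _ ≤ M * r := by
                rw [norm_sub_rev]
                exact mul_le_mul_of_nonneg_left hy1.le hM.le
        have hb1' : (M * r) ^ e ≤ ‖A y₀ - A y‖ ^ e :=
          Real.rpow_le_rpow_of_nonpos hxA hb1 he_nonpos
        have hb2' : r ^ (-β) ≤ ‖y - y₀‖ ^ (-β) :=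
          Real.rpow_le_rpow_of_nonpos hyy hy1.le (neg_nonpos.mpr hβ.le)
        rw [Set.indicator_of_mem (by rw [mem_ball, dist_eq_norm]; exact hy1)]
        exact ENNReal.ofReal_le_ofReal
          (mul_le_mul hb1' hb2' (Real.rpow_nonneg hr.le _) (Real.rpow_nonneg (norm_nonneg _) _))
      calc ENNReal.ofReal (min c₁ c₂)
          ≤ ENNReal.ofReal c₂ := ENNReal.ofReal_le_ofReal (min_le_right _ _)
        _ = ENNReal.ofReal ((M * r) ^ e * r ^ (-β)) * volume S₀ := by
            rw [hc₂def, ENNReal.ofReal_mul (by positivity),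
              ENNReal.ofReal_toReal hS₀fin.ne]
        _ ≤ _ := lb_aux volume _ S₀ hS₀meas _ hpt
    · -- β ≠ α : LHS is 0
      have h0 : -(β - α) ≠ 0 := by
        intro h; exact hβα (by linarith [neg_eq_zero.mp h])
      rw [sub_self, norm_zero, Real.zero_rpow h0, mul_zero, ENNReal.ofReal_zero]
      exact zero_le
  · -- x ≠ A y₀
    set t := ‖x - A y₀‖ with htdef
    have ht : 0 < t := norm_pos_iff.mpr (sub_ne_zero.mpr hxe)
    have htM : t / M < r := (div_lt_iff₀' hM).mpr hx
    set S := ball y₀ (t / M) \ ({y₀} ∪ {A.symm x}) with hSdef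
    have hSmeas : MeasurableSet S :=
      measurableSet_ball.diff ((measurableSet_singleton _).union (measurableSet_singleton _))
    have hvolS : volume S = ENNReal.ofReal ((t / M) ^ n) * volume (ball (0 : EuclideanSpace ℝ (Fin n)) 1) := by
      rw [hSdef, measure_diff_null (measure_union_null (measure_singleton _) (measure_singleton _)),
        Measure.addHaar_ball_of_pos volume y₀ (by positivity), finrank_euclideanSpace_fin]
    have hpt : ∀ y ∈ S,
        ENNReal.ofReal ((2 * t) ^ e * (t / M) ^ (-β)) ≤
          ENNReal.ofReal (‖x - A y‖ ^ e *
            Set.indicator (ball y₀ r) (fun y => ‖y - y₀‖ ^ (-β)) y) := by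
      intro y hy
      obtain ⟨hy1, hy2⟩ := hy
      rw [mem_ball, dist_eq_norm] at hy1
      simp only [Set.mem_union, Set.mem_singleton_iff, not_or] at hy2
      obtain ⟨hy0, hyx⟩ := hy2
      have hyy : 0 < ‖y - y₀‖ := norm_pos_iff.mpr (sub_ne_zero.mpr hy0)
      have hxA : 0 < ‖x - A y‖ := by
        rw [norm_pos_iff, sub_ne_zero]
        intro h
        exact hyx (by rw [h, ContinuousLinearEquiv.symm_apply_apply])
      have hb1 : ‖x - A y‖ ≤ 2 * t := by
        calc ‖x - A y‖ = ‖(x - A y₀) + (A y₀ - A y)‖ := by rw [sub_add_sub_cancel]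
          _ ≤ ‖x - A y₀‖ + ‖A y₀ - A y‖ := norm_add_le _ _
          _ = t + ‖A' (y₀ - y)‖ := by rw [map_sub]; rfl
          _ ≤ t + M * ‖y₀ - y‖ := by linarith [A'.le_opNorm (y₀ - y)]
          _ ≤ t + M * (t / M) := by
              have : ‖y₀ - y‖ ≤ t / M := by rw [norm_sub_rev]; exact hy1.le
              nlinarith
          _ = 2 * t := by field_simp; ring
      have hb1' : (2 * t) ^ e ≤ ‖x - A y‖ ^ e :=
        Real.rpow_le_rpow_of_nonpos hxA hb1 he_nonpos
      have hb2' : (t / M) ^ (-β) ≤ ‖y - y₀‖ ^ (-β) :=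
        Real.rpow_le_rpow_of_nonpos hyy hy1.le (neg_nonpos.mpr hβ.le)
      rw [Set.indicator_of_mem (by rw [mem_ball, dist_eq_norm]; exact hy1.trans htM)]
      exact ENNReal.ofReal_le_ofReal
        (mul_le_mul hb1' hb2' (Real.rpow_nonneg (by positivity) _)
          (Real.rpow_nonneg (norm_nonneg _) _))
    have hdivz : ∀ z : ℝ, (t / M) ^ z = t ^ z * M ^ (-z) := by
      intro z
      rw [Real.div_rpow ht.le hM.le, Real.rpow_neg hM.le, div_eq_mul_inv]
    have key : min c₁ c₂ * t ^ (-(β - α)) ≤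
        (2 * t) ^ e * (t / M) ^ (-β) * ((t / M) ^ n * ω) := by
      have keyeq : c₁ * t ^ (-(β - α)) = (2 * t) ^ e * (t / M) ^ (-β) * ((t / M) ^ n * ω) := by
        have e1 : ((t / M) ^ n : ℝ) = t ^ ((n : ℝ)) * M ^ (-(n : ℝ)) := by
          rw [← Real.rpow_natCast (t / M) n, hdivz]
        have e2 : (t / M) ^ (-β) = t ^ (-β) * M ^ β := by rw [hdivz, neg_neg]
        have e3 : (2 * t) ^ e = 2 ^ e * t ^ e := Real.mul_rpow (by norm_num) ht.le
        have e4 : t ^ (-(β - α)) = t ^ e * t ^ (-β) * t ^ ((n : ℝ)) := by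
          rw [← Real.rpow_add ht, ← Real.rpow_add ht]
          congr 1 <;> (rw [he]; ring)
        have e5 : M ^ (β - (n : ℝ)) = M ^ β * M ^ (-(n : ℝ)) := by
          rw [← Real.rpow_add hM]
          congr 1 <;> ring
        rw [hc₁def, e1, e2, e3, e4, e5]
        ring
      calc min c₁ c₂ * t ^ (-(β - α)) ≤ c₁ * t ^ (-(β - α)) :=
            mul_le_mul_of_nonneg_right (min_le_left _ _) (Real.rpow_nonneg ht.le _)
        _ = _ := keyeq
    calc ENNReal.ofReal (min c₁ c₂ * t ^ (-(β - α)))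
        ≤ ENNReal.ofReal ((2 * t) ^ e * (t / M) ^ (-β) * ((t / M) ^ n * ω)) :=
          ENNReal.ofReal_le_ofReal key
      _ = ENNReal.ofReal ((2 * t) ^ e * (t / M) ^ (-β)) * volume S := by
          have hωeq : ENNReal.ofReal ω = volume (ball (0 : EuclideanSpace ℝ (Fin n)) 1) := by
            rw [hω, ENNReal.ofReal_toReal measure_ball_lt_top.ne]
          rw [ENNReal.ofReal_mul (p := (2 * t) ^ e * (t / M) ^ (-β)) (by positivity),
            ENNReal.ofReal_mul (p := ((t / M) ^ n : ℝ)) (by positivity), hωeq, hvolS]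
      _ ≤ _ := lb_aux volume _ S hSmeas _ hpt
end

section
/- Let 0 < α < n and let A be an invertible n×n matrix. Let p : ℝ^n → [1, ∞) be measurable, continuous at y₀ and at Ay₀ for some y₀ ∈ ℝ^n, with 1 ≤ p ≤ p₊ < n/α, and suppose p(Ay₀) > p(y₀). Define q(·) by 1/q(x) = 1/p(x) − α/n. Then there exists f ∈ L^{p(·)}(ℝ^n) such that T_A f ∉ L^{q(·)}(ℝ^n), where T_A f(x) = ∫ |x − Ay|^{−(n−α)} f(y) dy. -/
open MeasureTheory Metric ENNReal

/-- The modular `∫ (|f(x)|/λ)^{p(x)} dx` of the variable exponent space. -/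
noncomputable def modular {n : ℕ} (p : EuclideanSpace ℝ (Fin n) → ℝ)
    (f : EuclideanSpace ℝ (Fin n) → ℝ≥0∞) (lam : ℝ≥0∞) : ℝ≥0∞ :=
  ∫⁻ x, (f x / lam) ^ (p x)

/-- Membership in the variable exponent Lebesgue space `L^{p(·)}`. -/
def MemVarLp {n : ℕ} (p : EuclideanSpace ℝ (Fin n) → ℝ)
    (f : EuclideanSpace ℝ (Fin n) → ℝ≥0∞) : Prop :=
  ∃ lam : ℝ≥0∞, 0 < lam ∧ lam ≠ ⊤ ∧ modular p f lam < ⊤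

/-- The Luxemburg norm of `L^{p(·)}` (valued in `ℝ≥0∞`). -/
noncomputable def luxNorm {n : ℕ} (p : EuclideanSpace ℝ (Fin n) → ℝ)
    (f : EuclideanSpace ℝ (Fin n) → ℝ≥0∞) : ℝ≥0∞ :=
  sInf {lam : ℝ≥0∞ | 0 < lam ∧ modular p f lam ≤ 1}

/-- The fractional type operator `T_A f(x) = ∫ |x − Ay|^{−(n−α)} f(y) dy`. -/
noncomputable def TA {n : ℕ} (α : ℝ)
    (A : EuclideanSpace ℝ (Fin n) ≃L[ℝ] EuclideanSpace ℝ (Fin n))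
    (f : EuclideanSpace ℝ (Fin n) → ℝ) (x : EuclideanSpace ℝ (Fin n)) : ℝ≥0∞ :=
  ∫⁻ y, ENNReal.ofReal (‖x - A y‖ ^ (-((n : ℝ) - α))) * ENNReal.ofReal |f y|

/-- `|f|` as an `ℝ≥0∞`-valued function. -/
noncomputable def absE {n : ℕ} (f : EuclideanSpace ℝ (Fin n) → ℝ)
    (x : EuclideanSpace ℝ (Fin n)) : ℝ≥0∞ := ENNReal.ofReal |f x|




section Helpers

variable {n : ℕ}

lemma euclid_nontrivial (hn : 0 < n) : Nontrivial (EuclideanSpace ℝ (Fin n)) := by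
  haveI : Nonempty (Fin n) := ⟨⟨0, hn⟩⟩
  exact (WithLp.equiv 2 (Fin n → ℝ)).nontrivial

lemma ball_volume (hn : 0 < n) (c : EuclideanSpace ℝ (Fin n)) {r : ℝ} (hr : 0 ≤ r) :
    volume (ball c r) = ENNReal.ofReal (r ^ n) * volume (ball (0 : EuclideanSpace ℝ (Fin n)) 1) := by
  haveI := euclid_nontrivial hn
  rw [Measure.addHaar_ball _ _ hr, finrank_euclideanSpace_fin]

lemma lintegral_ball_eq_tsum (hn : 0 < n) (c : EuclideanSpace ℝ (Fin n)) {R : ℝ} (hR : 0 < R)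
    (g : EuclideanSpace ℝ (Fin n) → ℝ≥0∞) :
    ∫⁻ x in ball c R, g x
      = ∑' k : ℕ, ∫⁻ x in ball c (R * 2⁻¹ ^ k) \ ball c (R * 2⁻¹ ^ (k + 1)), g x := by
  haveI := euclid_nontrivial hn
  have hsm : ∀ k : ℕ, MeasurableSet
      (ball c (R * 2⁻¹ ^ k) \ ball c (R * 2⁻¹ ^ (k + 1)) :
        Set (EuclideanSpace ℝ (Fin n))) :=
    fun k => measurableSet_ball.diff measurableSet_ball
  have hdisj : Pairwise (Function.onFun Disjoint
      (fun k : ℕ => ball c (R * 2⁻¹ ^ k) \ ball c (R * 2⁻¹ ^ (k + 1)))) := by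
    have key : ∀ k l : ℕ, k < l → Disjoint
        (ball c (R * 2⁻¹ ^ k) \ ball c (R * 2⁻¹ ^ (k + 1)))
        (ball c (R * 2⁻¹ ^ l) \ ball c (R * 2⁻¹ ^ (l + 1))) := by
      intro k l hkl
      rw [Set.disjoint_left]
      rintro x ⟨-, hx2⟩ ⟨hx3, -⟩
      exact hx2 (ball_subset_ball (by
        have : ((2:ℝ)⁻¹) ^ l ≤ 2⁻¹ ^ (k + 1) :=
          pow_le_pow_of_le_one (by norm_num) (by norm_num) hkl
        nlinarith) |>.trans_eq rfl hx3)
    intro k l hkl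
    rcases lt_or_gt_of_ne hkl with h | h
    · exact key k l h
    · exact (key l k h).symm
  have hcover : (⋃ k : ℕ, ball c (R * 2⁻¹ ^ k) \ ball c (R * 2⁻¹ ^ (k + 1)))
      = ball c R \ {c} := by
    ext x
    simp only [Set.mem_iUnion, Set.mem_diff, mem_ball, Set.mem_singleton_iff]
    constructor
    · rintro ⟨k, hk1, hk2⟩
      push_neg at hk2
      have hpos : (0:ℝ) < R * 2⁻¹ ^ (k + 1) := by positivity
      refine ⟨lt_of_lt_of_le hk1 ?_, ?_⟩
      · nlinarith [pow_le_one₀ (by norm_num : (0:ℝ) ≤ 2⁻¹) (by norm_num : (2:ℝ)⁻¹ ≤ 1) (n := k)]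
      · intro hxc
        rw [hxc, dist_self] at hk2
        exact absurd hk2 (not_le_of_gt hpos)
    · rintro ⟨hx1, hx2⟩
      have hd : 0 < dist x c := dist_pos.mpr hx2
      have hdR : dist x c / R < 1 := (div_lt_one hR).mpr hx1
      obtain ⟨m, hm⟩ := exists_pow_lt_of_lt_one (div_pos hd hR) (by norm_num : (2:ℝ)⁻¹ < 1)
      have hex : ∃ j : ℕ, R * 2⁻¹ ^ (j + 1) ≤ dist x c := by
        rcases m with - | m'
        · exfalso; simp at hm; nlinarith
        · have h2 := (lt_div_iff₀ hR).mp hm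
          exact ⟨m', by rw [mul_comm]; exact h2.le⟩
      classical
      set k := Nat.find hex with hkdef
      refine ⟨k, ?_, not_lt.mpr (Nat.find_spec hex)⟩
      rcases Nat.eq_zero_or_pos k with h0 | hpos
      · rw [h0]; simpa using hx1
      · have := Nat.find_min hex (Nat.sub_lt hpos one_pos)
        push_neg at this
        have hk1 : k - 1 + 1 = k := Nat.succ_pred_eq_of_pos hpos
        rw [hk1] at this
        exact this
  have hae : (ball c R \ {c} : Set (EuclideanSpace ℝ (Fin n))) =ᵐ[volume] ball c R := by
    rw [diff_ae_eq_self]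
    exact le_antisymm ((measure_mono Set.inter_subset_right).trans (by simp)) zero_le
  rw [← Measure.restrict_congr_set hae, ← hcover, lintegral_iUnion hsm hdisj]

end Helpers

lemma e1' {t : ℝ} (ht : 0 ≤ t) (k : ℕ) (γ : ℝ) : ((t:ℝ) ^ k) ^ γ = t ^ ((k:ℝ) * γ) := by
  rw [← Real.rpow_natCast t k, ← Real.rpow_mul ht, mul_comm]

lemma e2' {t : ℝ} (ht : 0 ≤ t) (γ : ℝ) (k : ℕ) : ((t:ℝ) ^ γ) ^ k = t ^ (γ * (k:ℝ)) := by
  rw [← Real.rpow_natCast (t ^ γ) k, ← Real.rpow_mul ht]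

lemma keyA {R β : ℝ} (hR : 0 < R) (n : ℕ) (k : ℕ) :
    (R * 2⁻¹ ^ (k + 1)) ^ (-β) * (R * 2⁻¹ ^ k) ^ (n:ℝ)
      = (R ^ (-β) * R ^ (n:ℝ) * (2:ℝ)⁻¹ ^ (-β)) * ((2:ℝ)⁻¹ ^ ((n:ℝ) - β)) ^ k := by
  have h2 : (0:ℝ) < 2⁻¹ := by norm_num
  have hh : ∀ a b : ℝ, (2⁻¹:ℝ) ^ a * 2⁻¹ ^ b = 2⁻¹ ^ (a + b) :=
    fun a b => (Real.rpow_add h2 a b).symm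
  calc (R * 2⁻¹ ^ (k + 1)) ^ (-β) * (R * 2⁻¹ ^ k) ^ (n:ℝ)
      = R ^ (-β) * R ^ (n:ℝ) * ((2⁻¹:ℝ) ^ (((k:ℝ) + 1) * (-β)) * 2⁻¹ ^ ((k:ℝ) * n)) := by
        rw [Real.mul_rpow hR.le (by positivity), Real.mul_rpow hR.le (by positivity),
          e1' h2.le, e1' h2.le]
        push_cast
        ring
    _ = R ^ (-β) * R ^ (n:ℝ) * (2⁻¹:ℝ) ^ (-β + ((n:ℝ) - β) * (k:ℝ)) := by
        rw [hh]; congr 1; ring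
    _ = (R ^ (-β) * R ^ (n:ℝ) * (2:ℝ)⁻¹ ^ (-β)) * ((2:ℝ)⁻¹ ^ ((n:ℝ) - β)) ^ k := by
        rw [Real.rpow_add h2, e2' h2.le]; ring

lemma keyB {R : ℝ} (hR : 0 < R) (n : ℕ) (k : ℕ) :
    (R * 2⁻¹ ^ k) ^ (-(n:ℝ)) * ((R * 2⁻¹ ^ k) ^ n - (R * 2⁻¹ ^ (k + 1)) ^ n)
      = 1 - (2⁻¹:ℝ) ^ n := by
  have hb : (0:ℝ) < R * 2⁻¹ ^ k := by positivity
  have h1 : (R * 2⁻¹ ^ (k + 1)) ^ n = (R * 2⁻¹ ^ k) ^ n * (2⁻¹:ℝ) ^ n := by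
    rw [← mul_pow]; congr 1; ring
  have h2 : (R * 2⁻¹ ^ k) ^ (-(n:ℝ)) = ((R * 2⁻¹ ^ k) ^ n)⁻¹ := by
    rw [Real.rpow_neg hb.le, Real.rpow_natCast]
  rw [h1, h2, mul_sub]
  have hbn : ((R * 2⁻¹ ^ k) ^ n : ℝ) ≠ 0 := by positivity
  field_simp
lemma lemA {n : ℕ} (hn : 0 < n) (c : EuclideanSpace ℝ (Fin n)) {R β : ℝ} (hR : 0 < R)
    (hβ0 : 0 ≤ β) (hβ : β < n) :
    ∫⁻ x in ball c R, ENNReal.ofReal (‖x - c‖ ^ (-β)) < ⊤ := by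
  haveI := euclid_nontrivial hn
  set V := volume (ball (0 : EuclideanSpace ℝ (Fin n)) 1) with hVdef
  rw [lintegral_ball_eq_tsum hn c hR]
  set C : ℝ := R ^ (-β) * R ^ (n:ℝ) * (2:ℝ)⁻¹ ^ (-β) with hCdef
  set ρ : ℝ := (2:ℝ)⁻¹ ^ ((n:ℝ) - β) with hρdef
  have hρ0 : 0 ≤ ρ := Real.rpow_nonneg (by norm_num) _
  have hρ1 : ρ < 1 := Real.rpow_lt_one (by norm_num) (by norm_num) (by
    have : (β:ℝ) < n := hβ
    linarith)
  have hterm : ∀ k : ℕ,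
      ∫⁻ x in ball c (R * 2⁻¹ ^ k) \ ball c (R * 2⁻¹ ^ (k + 1)),
        ENNReal.ofReal (‖x - c‖ ^ (-β))
        ≤ ENNReal.ofReal C * V * ENNReal.ofReal ρ ^ k := by
    intro k
    have hr1 : (0:ℝ) < R * 2⁻¹ ^ (k + 1) := by positivity
    have hb : ∀ x ∈ ball c (R * 2⁻¹ ^ k) \ ball c (R * 2⁻¹ ^ (k + 1)),
        ENNReal.ofReal (‖x - c‖ ^ (-β))
          ≤ ENNReal.ofReal ((R * 2⁻¹ ^ (k + 1)) ^ (-β)) := by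
      rintro x ⟨-, hx2⟩
      rw [mem_ball, dist_eq_norm] at hx2
      push_neg at hx2
      exact ENNReal.ofReal_le_ofReal
        (Real.rpow_le_rpow_of_nonpos hr1 hx2 (neg_nonpos.mpr hβ0))
    calc ∫⁻ x in ball c (R * 2⁻¹ ^ k) \ ball c (R * 2⁻¹ ^ (k + 1)),
          ENNReal.ofReal (‖x - c‖ ^ (-β))
        ≤ ∫⁻ _x in ball c (R * 2⁻¹ ^ k) \ ball c (R * 2⁻¹ ^ (k + 1)),
            ENNReal.ofReal ((R * 2⁻¹ ^ (k + 1)) ^ (-β)) :=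
          setLIntegral_mono' (measurableSet_ball.diff measurableSet_ball) hb
      _ = ENNReal.ofReal ((R * 2⁻¹ ^ (k + 1)) ^ (-β))
            * volume (ball c (R * 2⁻¹ ^ k) \ ball c (R * 2⁻¹ ^ (k + 1))) :=
          setLIntegral_const _ _
      _ ≤ ENNReal.ofReal ((R * 2⁻¹ ^ (k + 1)) ^ (-β)) * volume (ball c (R * 2⁻¹ ^ k)) :=
          mul_le_mul_right (measure_mono Set.diff_subset) _
      _ = ENNReal.ofReal ((R * 2⁻¹ ^ (k + 1)) ^ (-β))
            * (ENNReal.ofReal ((R * 2⁻¹ ^ k) ^ n) * V) := by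
          rw [ball_volume hn c (by positivity)]
      _ = ENNReal.ofReal ((R * 2⁻¹ ^ (k + 1)) ^ (-β) * (R * 2⁻¹ ^ k) ^ n) * V := by
          rw [ENNReal.ofReal_mul (by positivity), mul_assoc]
      _ = ENNReal.ofReal C * V * ENNReal.ofReal ρ ^ k := by
          have hkey : (R * 2⁻¹ ^ (k + 1)) ^ (-β) * (R * 2⁻¹ ^ k) ^ n = C * ρ ^ k := by
            rw [← Real.rpow_natCast (R * 2⁻¹ ^ k) n]
            exact keyA hR n k
          rw [hkey, ENNReal.ofReal_mul (by positivity), ENNReal.ofReal_pow hρ0]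
          ring
  refine lt_of_le_of_lt (ENNReal.tsum_le_tsum hterm) ?_
  rw [ENNReal.tsum_mul_left, ENNReal.tsum_geometric]
  refine ENNReal.mul_lt_top (ENNReal.mul_lt_top ENNReal.ofReal_lt_top measure_ball_lt_top) ?_
  rw [ENNReal.inv_lt_top]
  rw [tsub_pos_iff_lt]
  exact lt_of_lt_of_le (ENNReal.ofReal_lt_one.mpr hρ1) le_rfl

lemma lemB {n : ℕ} (hn : 0 < n) (c : EuclideanSpace ℝ (Fin n)) {R : ℝ} (hR : 0 < R) :
    ∫⁻ x in ball c R, ENNReal.ofReal (‖x - c‖ ^ (-(n:ℝ))) = ⊤ := by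
  haveI := euclid_nontrivial hn
  set V := volume (ball (0 : EuclideanSpace ℝ (Fin n)) 1) with hVdef
  have hV0 : V ≠ 0 := (measure_ball_pos _ _ one_pos).ne'
  have hVfin : V ≠ ⊤ := measure_ball_lt_top.ne
  rw [lintegral_ball_eq_tsum hn c hR]
  set ε := ENNReal.ofReal (1 - (2⁻¹:ℝ) ^ n) * V with hεdef
  have hε : ε ≠ 0 := by
    refine mul_ne_zero ?_ hV0
    have h1 : (2⁻¹:ℝ) ^ n < 1 := pow_lt_one₀ (by norm_num) (by norm_num) hn.ne'
    exact (ENNReal.ofReal_pos.mpr (by linarith)).ne'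
  have hterm : ∀ k : ℕ, ε ≤
      ∫⁻ x in ball c (R * 2⁻¹ ^ k) \ ball c (R * 2⁻¹ ^ (k + 1)),
        ENNReal.ofReal (‖x - c‖ ^ (-(n:ℝ))) := by
    intro k
    have hrk : (0:ℝ) < R * 2⁻¹ ^ k := by positivity
    have hrk1 : (0:ℝ) < R * 2⁻¹ ^ (k + 1) := by positivity
    have hsub : ball c (R * 2⁻¹ ^ (k + 1)) ⊆ ball c (R * 2⁻¹ ^ k) := by
      apply ball_subset_ball
      have : (2⁻¹:ℝ) ^ (k + 1) ≤ 2⁻¹ ^ k :=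
        pow_le_pow_of_le_one (by norm_num) (by norm_num) (Nat.le_succ k)
      nlinarith
    have hμ : volume (ball c (R * 2⁻¹ ^ k) \ ball c (R * 2⁻¹ ^ (k + 1)))
        = ENNReal.ofReal ((R * 2⁻¹ ^ k) ^ n - (R * 2⁻¹ ^ (k + 1)) ^ n) * V := by
      rw [measure_diff hsub measurableSet_ball.nullMeasurableSet measure_ball_lt_top.ne,
        ball_volume hn c hrk.le, ball_volume hn c hrk1.le,
        ← ENNReal.sub_mul fun _ _ => hVfin, ← ENNReal.ofReal_sub _ (by positivity)]
    have hb : ∀ x ∈ ball c (R * 2⁻¹ ^ k) \ ball c (R * 2⁻¹ ^ (k + 1)),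
        ENNReal.ofReal ((R * 2⁻¹ ^ k) ^ (-(n:ℝ)))
          ≤ ENNReal.ofReal (‖x - c‖ ^ (-(n:ℝ))) := by
      rintro x ⟨hx1, hx2⟩
      rw [mem_ball, dist_eq_norm] at hx1
      rw [mem_ball, dist_eq_norm] at hx2
      push_neg at hx2
      have hx0 : (0:ℝ) < ‖x - c‖ := lt_of_lt_of_le hrk1 hx2
      exact ENNReal.ofReal_le_ofReal
        (Real.rpow_le_rpow_of_nonpos hx0 hx1.le (neg_nonpos.mpr (Nat.cast_nonneg n)))
    calc ε = ENNReal.ofReal ((R * 2⁻¹ ^ k) ^ (-(n:ℝ)))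
          * (ENNReal.ofReal ((R * 2⁻¹ ^ k) ^ n - (R * 2⁻¹ ^ (k + 1)) ^ n) * V) := by
          rw [hεdef, ← mul_assoc, ← ENNReal.ofReal_mul (by positivity), keyB hR n k]
      _ = ENNReal.ofReal ((R * 2⁻¹ ^ k) ^ (-(n:ℝ)))
            * volume (ball c (R * 2⁻¹ ^ k) \ ball c (R * 2⁻¹ ^ (k + 1))) := by rw [hμ]
      _ = ∫⁻ _x in ball c (R * 2⁻¹ ^ k) \ ball c (R * 2⁻¹ ^ (k + 1)),
            ENNReal.ofReal ((R * 2⁻¹ ^ k) ^ (-(n:ℝ))) := (setLIntegral_const _ _).symm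
      _ ≤ _ := setLIntegral_mono' (measurableSet_ball.diff measurableSet_ball) hb
  refine top_le_iff.mp ?_
  calc (⊤:ℝ≥0∞) = ∑' _ : ℕ, ε := (ENNReal.tsum_const_eq_top_of_ne_zero hε).symm
    _ ≤ _ := ENNReal.tsum_le_tsum hterm

set_option maxHeartbeats 1000000 in
/-- if `p(Ay₀) > p(y₀)` at points of continuity, there is `f ∈ L^{p(·)}`
with `T_A f ∉ L^{q(·)}`, `1/q = 1/p − α/n`. -/
theorem stmt4 {n : ℕ} (α : ℝ) (hα : 0 < α) (hαn : α < n)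
    (A : EuclideanSpace ℝ (Fin n) ≃L[ℝ] EuclideanSpace ℝ (Fin n))
    (p q : EuclideanSpace ℝ (Fin n) → ℝ) (hpmeas : Measurable p)
    (y₀ : EuclideanSpace ℝ (Fin n))
    (hc1 : ContinuousAt p y₀) (hc2 : ContinuousAt p (A y₀))
    (hp1 : ∀ x, 1 ≤ p x)
    (hpplus : ∃ P : ℝ, (∀ x, p x ≤ P) ∧ P * α < n)
    (hgt : p (A y₀) > p y₀)
    (hq : ∀ x, 1 / q x = 1 / p x - α / n) :
    ∃ f : EuclideanSpace ℝ (Fin n) → ℝ,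
      MemVarLp p (absE f) ∧ ¬ MemVarLp q (TA α A f) := by
  classical
  obtain ⟨P, hPub, hPα⟩ := hpplus
  have hn0 : (0:ℝ) < n := lt_trans hα hαn
  have hnn : 0 < n := by exact_mod_cast hn0
  set p₀ := p y₀ with hp₀def
  set p₁ := p (A y₀) with hp₁def
  have hp₀1 : 1 ≤ p₀ := hp1 y₀
  have h01 : p₀ < p₁ := hgt
  have hP1 : 1 ≤ P := le_trans hp₀1 (hPub y₀)
  set s : ℝ := (p₀ + p₁) / 2 with hsdef
  set s' : ℝ := (p₀ + s) / 2 with hs'def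
  have hs0 : 0 < s := by simp only [hsdef]; linarith
  have hp₀s' : p₀ < s' := by simp only [hs'def, hsdef]; linarith
  have hs's : s' < s := by simp only [hs'def, hsdef]; linarith
  have hss1 : s < p₁ := by simp only [hsdef]; linarith
  have hs'0 : 0 < s' := lt_trans (lt_of_lt_of_le zero_lt_one hp₀1) hp₀s'
  have hsP : s ≤ P := le_trans hss1.le (hPub (A y₀))
  have hαsn : α * s < n := by nlinarith
  -- choose δ₁
  obtain ⟨δ, hδ0, hδ⟩ := Metric.continuousAt_iff.mp hc1 (s' - p₀) (by linarith)
  set δ₁ : ℝ := min δ 1 with hδ₁def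
  have hδ₁0 : 0 < δ₁ := lt_min hδ0 one_pos
  have hδ₁1 : δ₁ ≤ 1 := min_le_right _ _
  have hpx_lt_s' : ∀ x : EuclideanSpace ℝ (Fin n), dist x y₀ < δ₁ → p x ≤ s' := by
    intro x hx
    have := hδ (lt_of_lt_of_le hx (min_le_left _ _))
    rw [Real.dist_eq, abs_lt] at this
    linarith [this.1, this.2]
  -- the function f
  set f : EuclideanSpace ℝ (Fin n) → ℝ :=
    fun y => if y ∈ ball y₀ δ₁ then ‖y - y₀‖ ^ (-((n:ℝ) / s)) else 0 with hfdef
  have hfnn : ∀ y, 0 ≤ f y := by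
    intro y
    simp only [hfdef]
    split
    · exact Real.rpow_nonneg (norm_nonneg _) _
    · exact le_refl 0
  have hf_ball : ∀ x ∈ ball y₀ δ₁, f x = ‖x - y₀‖ ^ (-((n:ℝ) / s)) := by
    intro x hx
    simp only [hfdef]
    rw [if_pos hx]
  refine ⟨f, ?_, ?_⟩
  · -- membership in L^{p(·)}
    refine ⟨1, zero_lt_one, one_ne_top, ?_⟩
    have hmod : modular p (absE f) 1 = ∫⁻ x, (absE f x) ^ (p x) := by
      simp only [modular, div_one]
    rw [hmod]
    have hbound : ∀ x, (absE f x) ^ (p x)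
        ≤ (ball y₀ δ₁).indicator
            (fun x => ENNReal.ofReal (‖x - y₀‖ ^ (-((n:ℝ) * s' / s)))) x := by
      intro x
      by_cases hx : x ∈ ball y₀ δ₁
      · rw [Set.indicator_of_mem hx]
        by_cases hxy : x = y₀
        · rw [absE, hf_ball x hx, hxy, sub_self, norm_zero,
            Real.zero_rpow (neg_ne_zero.mpr (ne_of_gt (div_pos hn0 hs0))), abs_zero,
            ENNReal.ofReal_zero, ENNReal.zero_rpow_of_pos (by linarith [hp1 y₀])]
          exact zero_le
        · have ht0 : 0 < ‖x - y₀‖ := by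
            rw [norm_pos_iff]; exact sub_ne_zero.mpr hxy
          have ht1 : ‖x - y₀‖ ≤ 1 := by
            rw [mem_ball, dist_eq_norm] at hx
            linarith
          have hfx : f x = ‖x - y₀‖ ^ (-((n:ℝ) / s)) := hf_ball x hx
          have h1le : (1:ℝ) ≤ ‖x - y₀‖ ^ (-((n:ℝ) / s)) :=
            Real.one_le_rpow_of_pos_of_le_one_of_nonpos ht0 ht1 (by rw [neg_nonpos]; positivity)
          have h1le' : (1:ℝ≥0∞) ≤ ENNReal.ofReal (‖x - y₀‖ ^ (-((n:ℝ) / s))) :=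
            ENNReal.one_le_ofReal.mpr h1le
          have hpxle : p x ≤ s' := hpx_lt_s' x (mem_ball.mp hx)
          calc (absE f x) ^ (p x)
              = (ENNReal.ofReal (‖x - y₀‖ ^ (-((n:ℝ) / s)))) ^ (p x) := by
                rw [absE, hfx, abs_of_nonneg (Real.rpow_nonneg (norm_nonneg _) _)]
            _ ≤ (ENNReal.ofReal (‖x - y₀‖ ^ (-((n:ℝ) / s)))) ^ s' :=
                ENNReal.rpow_le_rpow_of_exponent_le h1le' hpxle
            _ = ENNReal.ofReal ((‖x - y₀‖ ^ (-((n:ℝ) / s))) ^ s') :=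
                ENNReal.ofReal_rpow_of_nonneg (Real.rpow_nonneg (norm_nonneg _) _)
                  hs'0.le
            _ = ENNReal.ofReal (‖x - y₀‖ ^ (-((n:ℝ) * s' / s))) := by
                rw [← Real.rpow_mul (norm_nonneg _)]
                congr 1
                ring
      · rw [Set.indicator_of_notMem hx]
        have : f x = 0 := by simp only [hfdef, if_neg hx]
        rw [absE, this, abs_zero, ENNReal.ofReal_zero,
          ENNReal.zero_rpow_of_pos (by linarith [hp1 x])]
    calc ∫⁻ x, (absE f x) ^ (p x)
        ≤ ∫⁻ x, (ball y₀ δ₁).indicator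
            (fun x => ENNReal.ofReal (‖x - y₀‖ ^ (-((n:ℝ) * s' / s)))) x :=
          lintegral_mono hbound
      _ = ∫⁻ x in ball y₀ δ₁, ENNReal.ofReal (‖x - y₀‖ ^ (-((n:ℝ) * s' / s))) :=
          lintegral_indicator measurableSet_ball _
      _ < ⊤ := lemA hnn y₀ hδ₁0 (by positivity) (by
          rw [div_lt_iff₀ hs0]
          have h2 : (n:ℝ) * s' < (n:ℝ) * s := mul_lt_mul_of_pos_left hs's hn0
          have h3 : (n:ℝ) * s = s * (n:ℝ) := mul_comm _ _
          linarith)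
  · -- NOT in L^{q(·)}
    haveI := euclid_nontrivial hnn
    set V := volume (ball (0 : EuclideanSpace ℝ (Fin n)) 1) with hVdef
    have hV0 : V ≠ 0 := (measure_ball_pos _ _ one_pos).ne'
    have hVfin : V ≠ ⊤ := measure_ball_lt_top.ne
    set M : ℝ := ‖(A : EuclideanSpace ℝ (Fin n) →L[ℝ] EuclideanSpace ℝ (Fin n))‖ + 1 with hMdef
    have hM1 : 1 ≤ M := le_add_of_nonneg_left (norm_nonneg _)
    have hM0 : 0 < M := lt_of_lt_of_le one_pos hM1
    set e : ℝ := α - (n:ℝ) / s with hedef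
    have he0 : e < 0 := by
      rw [hedef, sub_neg, lt_div_iff₀ hs0]
      linarith [hαsn]
    set C₀ : ℝ := (2:ℝ) ^ (-((n:ℝ) - α)) * M ^ ((n:ℝ)/s - n) with hC₀def
    have hC₀0 : 0 < C₀ := mul_pos (Real.rpow_pos_of_pos two_pos _) (Real.rpow_pos_of_pos hM0 _)
    set sS : ℝ := (1/s - α/(n:ℝ))⁻¹ with hsSdef
    have hsden : 0 < 1/s - α/(n:ℝ) := by
      rw [sub_pos, div_lt_div_iff₀ hn0 hs0]
      linarith [hαsn]
    have hsS0 : 0 < sS := inv_pos.mpr hsden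
    have hesS : e * sS = -(n:ℝ) := by
      have h1 : e = -((n:ℝ) * (1/s - α/(n:ℝ))) := by
        rw [hedef]; field_simp; ring
      rw [h1, hsSdef, neg_mul, mul_assoc, mul_inv_cancel₀ hsden.ne', mul_one]
    have hqx : ∀ x : EuclideanSpace ℝ (Fin n), s < p x → sS < q x := by
      intro x hx
      have hpx0 : 0 < p x := lt_of_lt_of_le one_pos (hp1 x)
      have hq1 : 0 < 1 / q x := by
        rw [hq x, sub_pos, div_lt_div_iff₀ hn0 hpx0]
        have h2 : α * p x ≤ α * P := mul_le_mul_of_nonneg_left (hPub x) hα.le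
        have h3 : α * P = P * α := mul_comm _ _
        linarith [hPα]
      have hqx0 : 0 < q x := by
        by_contra h
        push_neg at h
        have : 1 / q x ≤ 0 := div_nonpos_of_nonneg_of_nonpos zero_le_one h
        linarith
      have hlt : 1 / q x < 1 / sS := by
        rw [hq x, hsSdef, one_div ((1/s - α/(n:ℝ))⁻¹), inv_inv]
        have h2 : 1 / p x < 1 / s := by
          rw [div_lt_div_iff₀ hpx0 hs0]
          linarith [hx]
        linarith [h2]
      rw [div_lt_div_iff₀ hqx0 hsS0] at hlt
      linarith
    obtain ⟨r₀, hr₀0, hr₀⟩ := Metric.continuousAt_iff.mp hc2 (p₁ - s) (by linarith)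
    have hps : ∀ x : EuclideanSpace ℝ (Fin n), dist x (A y₀) < r₀ → s < p x := by
      intro x hx
      have := hr₀ hx
      rw [Real.dist_eq, abs_lt] at this
      linarith [this.1]
    set r₁ : ℝ := min r₀ δ₁ with hr₁def
    have hr₁0 : 0 < r₁ := lt_min hr₀0 hδ₁0
    -- key pointwise lower bound for TA
    have hclaim : ∀ x : EuclideanSpace ℝ (Fin n), x ≠ A y₀ → ‖x - A y₀‖ < δ₁ →
        ENNReal.ofReal (C₀ * ‖x - A y₀‖ ^ e) * V ≤ TA α A f x := by
      intro x hxne hxδ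
      set t : ℝ := ‖x - A y₀‖ with htdef
      have ht0 : 0 < t := by rw [htdef, norm_pos_iff]; exact sub_ne_zero.mpr hxne
      have htM0 : 0 < t / M := div_pos ht0 hM0
      set S : Set (EuclideanSpace ℝ (Fin n)) :=
        ball y₀ (t / M) \ ({y₀} ∪ {A.symm x}) with hSdef
      have hSmeas : MeasurableSet S :=
        measurableSet_ball.diff ((measurableSet_singleton _).union (measurableSet_singleton _))
      have hSsub : S ⊆ ball y₀ δ₁ := by
        intro y hy
        have h1 : y ∈ ball y₀ (t/M) := hy.1
        rw [mem_ball] at h1 ⊢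
        have h2 : t / M ≤ t := div_le_self ht0.le hM1
        linarith
      have hμS : volume S = ENNReal.ofReal ((t/M) ^ n) * V := by
        rw [hSdef, measure_diff_null
          (measure_union_null (measure_singleton _) (measure_singleton _)),
          ball_volume hnn y₀ htM0.le]
      have hpt : ∀ y ∈ S,
          ENNReal.ofReal ((2*t) ^ (-((n:ℝ) - α))) * ENNReal.ofReal ((t/M) ^ (-((n:ℝ)/s)))
            ≤ ENNReal.ofReal (‖x - A y‖ ^ (-((n:ℝ) - α))) * ENNReal.ofReal |f y| := by
        intro y hyS
        obtain ⟨hy1, hy2⟩ := hyS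
        rw [Set.mem_union, Set.mem_singleton_iff, Set.mem_singleton_iff] at hy2
        push_neg at hy2
        have hyy₀ : 0 < ‖y - y₀‖ := by rw [norm_pos_iff]; exact sub_ne_zero.mpr hy2.1
        have hyM : ‖y - y₀‖ < t / M := by rw [← dist_eq_norm]; exact mem_ball.mp hy1
        have hfy : f y = ‖y - y₀‖ ^ (-((n:ℝ)/s)) := hf_ball y (hSsub ⟨hy1, by
          rw [Set.mem_union, Set.mem_singleton_iff, Set.mem_singleton_iff]
          push_neg
          exact hy2⟩)
        have hAx : 0 < ‖x - A y‖ := by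
          rw [norm_pos_iff, sub_ne_zero]
          intro h
          exact hy2.2 (by rw [h, ContinuousLinearEquiv.symm_apply_apply])
        have hAy : ‖x - A y‖ ≤ 2 * t := by
          have h1 : x - A y = (x - A y₀) + (A y₀ - A y) := by abel
          have h2 : (A y₀ : EuclideanSpace ℝ (Fin n)) - A y = A (y₀ - y) := (map_sub A y₀ y).symm
          have h3 : ‖A (y₀ - y)‖ ≤ (M - 1) * ‖y₀ - y‖ := by
            rw [hMdef, add_sub_cancel_right]
            exact ((A : EuclideanSpace ℝ (Fin n) →L[ℝ] EuclideanSpace ℝ (Fin n)).le_opNorm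
              (y₀ - y)).trans_eq (by simp)
          have h4 : ‖y₀ - y‖ = ‖y - y₀‖ := norm_sub_rev _ _
          have h5 : (M - 1) * ‖y - y₀‖ ≤ t :=
            calc (M - 1) * ‖y - y₀‖ ≤ M * ‖y - y₀‖ :=
                  mul_le_mul_of_nonneg_right (by linarith) (norm_nonneg _)
              _ ≤ M * (t / M) := mul_le_mul_of_nonneg_left hyM.le hM0.le
              _ = t := by field_simp
          calc ‖x - A y‖ ≤ ‖x - A y₀‖ + ‖A y₀ - A y‖ := by rw [h1]; exact norm_add_le _ _
            _ = t + ‖A (y₀ - y)‖ := by rw [htdef, h2]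
            _ ≤ t + (M - 1) * ‖y - y₀‖ := by rw [h4] at h3; linarith
            _ ≤ 2 * t := by linarith
        refine mul_le_mul' (ENNReal.ofReal_le_ofReal ?_) (ENNReal.ofReal_le_ofReal ?_)
        · exact Real.rpow_le_rpow_of_nonpos hAx hAy (by rw [neg_nonpos]; linarith)
        · rw [hfy, abs_of_nonneg (Real.rpow_nonneg (norm_nonneg _) _)]
          exact Real.rpow_le_rpow_of_nonpos hyy₀ hyM.le (by rw [neg_nonpos]; positivity)
      have hcomp : (2*t) ^ (-((n:ℝ) - α)) * (t/M) ^ (-((n:ℝ)/s)) * ((t/M) ^ n : ℝ)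
          = C₀ * t ^ e := by
        have hdiv : ∀ γ : ℝ, (t / M) ^ γ = t ^ γ * M ^ (-γ) := by
          intro γ
          rw [Real.div_rpow ht0.le hM0.le, Real.rpow_neg hM0.le, div_eq_mul_inv]
        rw [← Real.rpow_natCast (t/M) n, Real.mul_rpow (by norm_num : (0:ℝ) ≤ 2) ht0.le,
          hdiv, hdiv, neg_neg, hC₀def, hedef,
          show ((n:ℝ)/s - n) = (n:ℝ)/s + (-(n:ℝ)) by ring,
          show (α - (n:ℝ)/s) = (-((n:ℝ) - α)) + (-((n:ℝ)/s)) + (n:ℝ) by ring,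
          Real.rpow_add hM0, Real.rpow_add ht0, Real.rpow_add ht0]
        ring
      calc ENNReal.ofReal (C₀ * t ^ e) * V
          = ENNReal.ofReal ((2*t) ^ (-((n:ℝ) - α)) * (t/M) ^ (-((n:ℝ)/s)) * ((t/M) ^ n : ℝ))
              * V := by rw [hcomp]
        _ = ENNReal.ofReal ((2*t) ^ (-((n:ℝ) - α))) * ENNReal.ofReal ((t/M) ^ (-((n:ℝ)/s)))
              * (ENNReal.ofReal ((t/M) ^ n) * V) := by
            rw [ENNReal.ofReal_mul (by positivity), ENNReal.ofReal_mul (by positivity)]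
            ring
        _ = ENNReal.ofReal ((2*t) ^ (-((n:ℝ) - α))) * ENNReal.ofReal ((t/M) ^ (-((n:ℝ)/s)))
              * volume S := by rw [hμS]
        _ = ∫⁻ _y in S, ENNReal.ofReal ((2*t) ^ (-((n:ℝ) - α)))
              * ENNReal.ofReal ((t/M) ^ (-((n:ℝ)/s))) := (setLIntegral_const _ _).symm
        _ ≤ ∫⁻ y in S, ENNReal.ofReal (‖x - A y‖ ^ (-((n:ℝ) - α))) * ENNReal.ofReal |f y| :=
            setLIntegral_mono' hSmeas hpt
        _ ≤ TA α A f x := setLIntegral_le_lintegral _ _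
    -- now suppose membership and derive a contradiction
    rintro ⟨lam, hlam0, hlamT, hfin⟩
    set L : ℝ := (lam / V).toReal + 1 with hLdef
    have hL0 : 0 < L := by positivity
    have hlamle : lam ≤ ENNReal.ofReal L * V := by
      have hdt : lam / V ≠ ⊤ := (ENNReal.div_lt_top hlamT hV0).ne
      have h1 : lam / V ≤ ENNReal.ofReal L :=
        calc lam / V = ENNReal.ofReal ((lam/V).toReal) := (ENNReal.ofReal_toReal hdt).symm
          _ ≤ ENNReal.ofReal L := ENNReal.ofReal_le_ofReal (by rw [hLdef]; linarith)
      calc lam = lam / V * V := (ENNReal.div_mul_cancel hV0 hVfin).symm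
        _ ≤ ENNReal.ofReal L * V := mul_le_mul_left h1 _
    set K : ℝ := max (L / C₀) 1 with hKdef
    have hK1 : 1 ≤ K := le_max_right _ _
    have hK0 : 0 < K := lt_of_lt_of_le one_pos hK1
    set r₂ : ℝ := min r₁ (K ^ (1/e)) with hr₂def
    have hKe : 0 < K ^ (1/e) := Real.rpow_pos_of_pos hK0 _
    have hr₂0 : 0 < r₂ := lt_min hr₁0 hKe
    have hC₀t : ∀ t : ℝ, 0 < t → t < r₂ → L ≤ C₀ * t ^ e := by
      intro t ht htr
      have h1 : t < K ^ (1/e) := lt_of_lt_of_le htr (min_le_right _ _)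
      have h2 : (K ^ (1/e)) ^ e < t ^ e := Real.rpow_lt_rpow_of_neg ht h1 he0
      rw [← Real.rpow_mul hK0.le, one_div, inv_mul_cancel₀ (ne_of_lt he0), Real.rpow_one] at h2
      have h3 : L / C₀ ≤ K := le_max_left _ _
      have h4 : L ≤ K * C₀ := (div_le_iff₀ hC₀0).mp h3
      have h5 : K * C₀ ≤ t ^ e * C₀ := mul_le_mul_of_nonneg_right h2.le hC₀0.le
      have h6 : t ^ e * C₀ = C₀ * t ^ e := mul_comm _ _
      linarith
    set D := ENNReal.ofReal (C₀ ^ sS) * V ^ sS * (lam ^ sS)⁻¹ with hDdef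
    have hlamS0 : lam ^ sS ≠ 0 := (ENNReal.rpow_pos hlam0 hlamT).ne'
    have hlamStop : lam ^ sS ≠ ⊤ := ENNReal.rpow_ne_top_of_nonneg hsS0.le hlamT
    have hDtop : D ≠ ⊤ :=
      ENNReal.mul_ne_top
        (ENNReal.mul_ne_top ENNReal.ofReal_ne_top
          (ENNReal.rpow_ne_top_of_nonneg hsS0.le hVfin))
        (by rwa [Ne, ENNReal.inv_eq_top])
    have hD0 : D ≠ 0 :=
      mul_ne_zero
        (mul_ne_zero (ENNReal.ofReal_pos.mpr (Real.rpow_pos_of_pos hC₀0 _)).ne'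
          (ENNReal.rpow_pos (zero_lt_iff.mpr hV0) hVfin).ne')
        (by rwa [Ne, ENNReal.inv_eq_zero])
    have hlow : ∀ x ∈ ball (A y₀) r₂ \ {A y₀},
        D * ENNReal.ofReal (‖x - A y₀‖ ^ (-(n:ℝ)))
          ≤ (TA α A f x / lam) ^ (q x) := by
      intro x hxS
      obtain ⟨hx1, hx2⟩ := hxS
      have hx2' : x ≠ A y₀ := fun h => hx2 (by simp [h])
      rw [mem_ball, dist_eq_norm] at hx1
      set t : ℝ := ‖x - A y₀‖ with htdef
      have ht0 : 0 < t := by rw [htdef, norm_pos_iff]; exact sub_ne_zero.mpr hx2'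
      have hr₂r₁ : r₂ ≤ r₁ := min_le_left _ _
      have htδ : t < δ₁ := lt_of_lt_of_le hx1 (hr₂r₁.trans (min_le_right _ _))
      have hqxx : sS < q x := hqx x (hps x (by
        rw [dist_eq_norm]
        exact lt_of_lt_of_le hx1 (hr₂r₁.trans (min_le_left _ _))))
      have hX := hclaim x hx2' htδ
      have hLt : L ≤ C₀ * t ^ e := hC₀t t ht0 hx1
      have hXlam : lam ≤ ENNReal.ofReal (C₀ * t ^ e) * V :=
        le_trans hlamle (mul_le_mul_left (ENNReal.ofReal_le_ofReal hLt) _)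
      have hone : 1 ≤ ENNReal.ofReal (C₀ * t ^ e) * V / lam := by
        rw [ENNReal.le_div_iff_mul_le (Or.inl hlam0.ne') (Or.inl hlamT), one_mul]
        exact hXlam
      have halg : (ENNReal.ofReal (C₀ * t ^ e) * V / lam) ^ sS
          = D * ENNReal.ofReal (t ^ (-(n:ℝ))) := by
        rw [ENNReal.div_rpow_of_nonneg _ _ hsS0.le, ENNReal.mul_rpow_of_nonneg _ _ hsS0.le,
          ENNReal.ofReal_rpow_of_nonneg (by positivity) hsS0.le,
          Real.mul_rpow hC₀0.le (Real.rpow_nonneg ht0.le _),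
          ← Real.rpow_mul ht0.le, hesS,
          ENNReal.ofReal_mul (by positivity), hDdef, div_eq_mul_inv]
        ring
      calc D * ENNReal.ofReal (t ^ (-(n:ℝ)))
          = (ENNReal.ofReal (C₀ * t ^ e) * V / lam) ^ sS := halg.symm
        _ ≤ (ENNReal.ofReal (C₀ * t ^ e) * V / lam) ^ (q x) :=
            ENNReal.rpow_le_rpow_of_exponent_le hone hqxx.le
        _ ≤ (TA α A f x / lam) ^ (q x) :=
            ENNReal.rpow_le_rpow (ENNReal.div_le_div_right hX _)
              (le_of_lt (lt_trans hsS0 hqxx))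
    have hSmeas2 : MeasurableSet (ball (A y₀) r₂ \ {A y₀} : Set (EuclideanSpace ℝ (Fin n))) :=
      measurableSet_ball.diff (measurableSet_singleton _)
    have hae2 : (ball (A y₀) r₂ \ {A y₀} : Set (EuclideanSpace ℝ (Fin n)))
        =ᵐ[volume] ball (A y₀) r₂ := by
      rw [diff_ae_eq_self]
      exact le_antisymm ((measure_mono Set.inter_subset_right).trans (by simp)) zero_le
    have htop : (⊤:ℝ≥0∞) ≤ modular q (TA α A f) lam := by
      calc (⊤:ℝ≥0∞)
          = D * ∫⁻ x in ball (A y₀) r₂, ENNReal.ofReal (‖x - A y₀‖ ^ (-(n:ℝ))) := by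
            rw [lemB hnn (A y₀) hr₂0, ENNReal.mul_top hD0]
        _ = D * ∫⁻ x in ball (A y₀) r₂ \ {A y₀},
              ENNReal.ofReal (‖x - A y₀‖ ^ (-(n:ℝ))) := by
            rw [Measure.restrict_congr_set hae2]
        _ = ∫⁻ x in ball (A y₀) r₂ \ {A y₀},
              D * ENNReal.ofReal (‖x - A y₀‖ ^ (-(n:ℝ))) :=
            (lintegral_const_mul' D _ hDtop).symm
        _ ≤ ∫⁻ x in ball (A y₀) r₂ \ {A y₀}, (TA α A f x / lam) ^ (q x) :=
            setLIntegral_mono' hSmeas2 hlow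
        _ ≤ ∫⁻ x, (TA α A f x / lam) ^ (q x) := setLIntegral_le_lintegral _ _
        _ = modular q (TA α A f) lam := rfl
    exact absurd (lt_of_le_of_lt htop hfin) (lt_irrefl ⊤)
end

section
/- Let A be an invertible n×n matrix with A^N = I for some N ∈ ℕ, 0 < α < n, and p : ℝ^n → [1, ∞) continuous with 1 < p₋ ≤ p₊ < n/α. If the operator T_A f(x) = ∫ |x − Ay|^{−(n−α)} f(y) dy is bounded from L^{p(·)}(ℝ^n) to L^{q(·)}(ℝ^n), where 1/q(·) = 1/p(·) − α/n, then p(Ay) = p(y) for all y ∈ ℝ^n. -/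
open Filter Topology


open MeasureTheory Metric ENNReal

lemma no_small (a b M δ₀ : ℝ) (hM : 0 < M) (hδ₀ : 0 < δ₀) (hab : a < b)
    (h : ∀ δ : ℝ, 0 < δ → δ ≤ δ₀ → δ ^ a ≤ M * δ ^ b) : False := by
  have htend : Tendsto (fun δ : ℝ => δ ^ (a - b)) (𝓝[>] 0) atTop := by
    have h1 : Tendsto (fun x : ℝ => x⁻¹) (𝓝[>] (0:ℝ)) atTop := tendsto_inv_nhdsGT_zero
    have h2 := (tendsto_rpow_atTop (by linarith : (0:ℝ) < b - a)).comp h1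
    refine h2.congr' ?_
    filter_upwards [self_mem_nhdsWithin] with δ (hδ : δ ∈ Set.Ioi (0:ℝ))
    rw [Function.comp_apply, ← Real.rpow_neg_one δ, ← Real.rpow_mul (le_of_lt hδ)]
    congr 1; ring
  have hev1 : ∀ᶠ δ in 𝓝[>] (0:ℝ), M < δ ^ (a - b) := htend.eventually_gt_atTop M
  have hev2 : ∀ᶠ δ in 𝓝[>] (0:ℝ), δ ≤ δ₀ :=
    eventually_nhdsWithin_of_eventually_nhds (Filter.Tendsto.eventually_le_const hδ₀ tendsto_id)
  have hev3 : ∀ᶠ δ in 𝓝[>] (0:ℝ), (0:ℝ) < δ := self_mem_nhdsWithin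
  obtain ⟨δ, h1, hle, hpos⟩ := (hev1.and (hev2.and hev3)).exists
  have hbb : δ ^ a ≤ M * δ ^ b := h δ hpos hle
  have hx : δ ^ (a - b) ≤ M := by
    rw [Real.rpow_sub hpos, div_le_iff₀ (Real.rpow_pos_of_pos hpos b)]
    linarith
  linarith


lemma lux_upper {n : ℕ} (p : EuclideanSpace ℝ (Fin n) → ℝ)
    (B : Set (EuclideanSpace ℝ (Fin n))) (hB : MeasurableSet B)
    (P : ℝ) (hP : 0 < P) (hp0 : ∀ x, 0 < p x) (hpB : ∀ x ∈ B, p x ≤ P)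
    (h0 : volume B ≠ 0) (h1 : volume B ≤ 1) (ht : volume B ≠ ⊤) :
    luxNorm p (B.indicator (fun _ => (1:ℝ≥0∞))) ≤ (volume B) ^ (1/P) := by
  set v := volume B with hv
  set lam := v ^ (1/P) with hlam
  have hlam0 : 0 < lam := ENNReal.rpow_pos (pos_iff_ne_zero.2 h0) ht
  have hlam1 : lam ≤ 1 := ENNReal.rpow_le_one h1 (by positivity)
  apply sInf_le
  refine ⟨hlam0, ?_⟩
  have hone : 1 ≤ lam⁻¹ := ENNReal.one_le_inv.2 hlam1
  have key : ∀ x, (B.indicator (fun _ => (1:ℝ≥0∞)) x / lam) ^ (p x)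
      ≤ B.indicator (fun _ => v⁻¹) x := by
    intro x
    by_cases hx : x ∈ B
    · simp only [Set.indicator_of_mem hx]
      have h2 : (1 : ℝ≥0∞) / lam = lam⁻¹ := one_div lam
      rw [h2]
      calc lam⁻¹ ^ p x ≤ lam⁻¹ ^ P := ENNReal.rpow_le_rpow_of_exponent_le hone (hpB x hx)
        _ = v⁻¹ := by
          rw [hlam, ← ENNReal.rpow_neg, ← ENNReal.rpow_mul]
          rw [show -(1/P) * P = -1 by field_simp, ENNReal.rpow_neg, ENNReal.rpow_one]
    · simp only [Set.indicator_of_notMem hx]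
      rw [ENNReal.zero_div, ENNReal.zero_rpow_of_pos (hp0 x)]
  calc modular p _ lam ≤ ∫⁻ x, B.indicator (fun _ => v⁻¹) x := lintegral_mono key
    _ = v⁻¹ * v := by rw [lintegral_indicator hB, setLIntegral_const]
    _ ≤ 1 := by rw [ENNReal.inv_mul_cancel h0 ht]

lemma lux_lower {n : ℕ} (q : EuclideanSpace ℝ (Fin n) → ℝ)
    (g : EuclideanSpace ℝ (Fin n) → ℝ≥0∞)
    (S : Set (EuclideanSpace ℝ (Fin n))) (hS : MeasurableSet S)
    (c : ℝ≥0∞) (Q : ℝ) (hQ : 0 < Q)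
    (hqS : ∀ x ∈ S, Q ≤ q x) (hg : ∀ x ∈ S, c ≤ g x)
    (h0 : volume S ≠ 0) (h1 : volume S ≤ 1) (ht : volume S ≠ ⊤) :
    c * (volume S) ^ (1/Q) ≤ luxNorm q g := by
  set v := volume S with hv
  apply le_sInf
  rintro lam ⟨hlam0, hmod⟩
  by_cases hlamt : lam = ⊤
  · simp [hlamt]
  by_cases hcl : c ≤ lam
  · calc c * v ^ (1/Q) ≤ lam * 1 :=
        mul_le_mul' hcl (ENNReal.rpow_le_one h1 (by positivity))
      _ = lam := mul_one lam
  push_neg at hcl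
  have hone : 1 ≤ c / lam := by
    rw [ENNReal.le_div_iff_mul_le (Or.inl hlam0.ne') (Or.inl hlamt), one_mul]
    exact hcl.le
  have key : v * (c/lam) ^ Q ≤ 1 := by
    calc v * (c/lam) ^ Q = ∫⁻ _ in S, (c/lam) ^ Q := by
          rw [setLIntegral_const, mul_comm]
      _ ≤ ∫⁻ x in S, (g x / lam) ^ (q x) := by
          apply setLIntegral_mono' hS
          intro x hx
          calc (c/lam) ^ Q ≤ (c/lam) ^ (q x) :=
                ENNReal.rpow_le_rpow_of_exponent_le hone (hqS x hx)
            _ ≤ (g x / lam) ^ (q x) :=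
                ENNReal.rpow_le_rpow (ENNReal.div_le_div_right (hg x hx) lam)
                  (hQ.le.trans (hqS x hx))
      _ ≤ ∫⁻ x, (g x / lam) ^ (q x) := setLIntegral_le_lintegral _ _
      _ ≤ 1 := hmod
  have h2 : (c/lam) ^ Q ≤ v⁻¹ := by
    rw [ENNReal.le_inv_iff_mul_le, mul_comm]; exact key
  have h3 : c / lam ≤ (v⁻¹) ^ (1/Q) := by
    have := ENNReal.rpow_le_rpow h2 (le_of_lt (by positivity : (0:ℝ) < 1/Q))
    rwa [← ENNReal.rpow_mul, mul_one_div, div_self hQ.ne', ENNReal.rpow_one] at this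
  calc c * v ^ (1/Q) = c / lam * lam * v ^ (1/Q) := by
        rw [ENNReal.div_mul_cancel hlam0.ne' hlamt]
    _ ≤ (v⁻¹) ^ (1/Q) * lam * v ^ (1/Q) := by gcongr
    _ = lam * ((v⁻¹ * v) ^ (1/Q)) := by
        rw [ENNReal.mul_rpow_of_ne_zero (by simp [ht]) h0]; ring
    _ = lam := by rw [ENNReal.inv_mul_cancel h0 ht, ENNReal.one_rpow, mul_one]


set_option maxHeartbeats 2000000 in
lemma key_step {n : ℕ} (α : ℝ) (hα : 0 < α) (hαn : α < n)
    (A : EuclideanSpace ℝ (Fin n) ≃L[ℝ] EuclideanSpace ℝ (Fin n))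
    (p q : EuclideanSpace ℝ (Fin n) → ℝ) (hpcont : Continuous p)
    (hpminus : ∃ P : ℝ, 1 < P ∧ ∀ x, P ≤ p x)
    (hpplus : ∃ P : ℝ, (∀ x, p x ≤ P) ∧ P * α < n)
    (hq : ∀ x, 1 / q x = 1 / p x - α / n)
    (hbdd : ∃ C : ℝ, 0 < C ∧ ∀ f : EuclideanSpace ℝ (Fin n) → ℝ,
      MemVarLp p (absE f) →
        MemVarLp q (TA α A f) ∧
          luxNorm q (TA α A f) ≤ ENNReal.ofReal C * luxNorm p (absE f)) :
    ∀ y, p (A y) ≤ p y := by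
  intro y₀
  by_contra hcon
  push_neg at hcon
  obtain ⟨Pm, hPm1, hPmle⟩ := hpminus
  obtain ⟨PM, hPMle, hPMα⟩ := hpplus
  obtain ⟨C, hC, hbound⟩ := hbdd
  have hn0 : (0:ℝ) < n := hα.trans hαn
  have hnn : 0 < n := by exact_mod_cast hn0
  haveI : Nontrivial (EuclideanSpace ℝ (Fin n)) := by
    refine ⟨EuclideanSpace.single ⟨0, hnn⟩ 1, 0, ?_⟩
    intro h
    have := congrArg (fun v => v ⟨0, hnn⟩) h
    simp [EuclideanSpace.single_apply] at this
  have hppos : ∀ x, 0 < p x := fun x => lt_of_lt_of_le (by linarith) (hPmle x)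
  have hsub : ∀ x, 0 < 1 / p x - α / n := by
    intro x
    rw [sub_pos, div_lt_div_iff₀ hn0 (hppos x)]
    calc α * p x = p x * α := mul_comm _ _
      _ ≤ PM * α := mul_le_mul_of_nonneg_right (hPMle x) hα.le
      _ < n := hPMα
      _ = 1 * n := (one_mul _).symm
  have hqval : ∀ x, q x = (1 / p x - α / n)⁻¹ := by
    intro x; rw [← hq x, one_div, inv_inv]
  have hqpos : ∀ x, 0 < q x := fun x => (hqval x) ▸ inv_pos.2 (hsub x)
  have hqcont : Continuous q := by
    rw [funext hqval]
    exact ((continuous_const.div hpcont fun x => (hppos x).ne').sub continuous_const).inv₀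
      fun x => (hsub x).ne'
  set p₀ := p y₀ with hp₀
  set q₁ := q (A y₀) with hq₁def
  have hp₀pos : 0 < p₀ := hppos y₀
  have hq₁pos : 0 < q₁ := hqpos (A y₀)
  have hq₁ : (n:ℝ) / q₁ = n / p (A y₀) - α := by
    have h := hq (A y₀)
    have h2 : (n:ℝ) * (1 / q₁) = n * (1 / p (A y₀) - α / n) := by rw [h]
    have h3 : (n:ℝ) * (α / n) = α := by field_simp
    rw [mul_sub, mul_one_div, mul_one_div, h3] at h2
    linarith [h2]
  have hF0 : 0 < (n:ℝ) / p₀ - α - n / q₁ := by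
    rw [hq₁]
    have : (n:ℝ) / p (A y₀) < n / p₀ := div_lt_div_of_pos_left hn0 hp₀pos hcon
    linarith
  -- choose ε
  have hφcont : ContinuousAt (fun ε : ℝ => (n:ℝ)/(p₀+ε) - α - n/(q₁-ε)) 0 := by
    apply ContinuousAt.sub
    apply ContinuousAt.sub
    · exact (continuousAt_const.div (continuousAt_const.add continuousAt_id)
        (by simp [hp₀pos.ne']))
    · exact continuousAt_const
    · exact (continuousAt_const.div (continuousAt_const.sub continuousAt_id)
        (by simp [hq₁pos.ne']))
  have hev : ∀ᶠ ε in 𝓝 (0:ℝ), 0 < (n:ℝ)/(p₀+ε) - α - n/(q₁-ε) :=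
    hφcont.eventually (eventually_gt_nhds (by simpa using hF0))
  have hev2 : ∀ᶠ ε in 𝓝 (0:ℝ), ε < q₁/2 := eventually_lt_nhds (by linarith)
  obtain ⟨ε, ⟨hφε, hεq⟩, hεpos⟩ :=
    (((hev.and hev2).filter_mono nhdsWithin_le_nhds).and
      (eventually_mem_nhdsWithin : ∀ᶠ x in 𝓝[>] (0:ℝ), x ∈ Set.Ioi 0)).exists
  rw [Set.mem_Ioi] at hεpos
  set P := p₀ + ε with hP_def
  set Q := q₁ - ε with hQ_def
  have hPpos : 0 < P := by positivity
  have hQpos : 0 < Q := by rw [hQ_def]; linarith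
  have hab : α + (n:ℝ)/Q < (n:ℝ)/P := by rw [hP_def, hQ_def]; linarith
  -- continuity radii
  obtain ⟨δ₁, hδ₁pos, hδ₁⟩ := Metric.continuousAt_iff.1 (hpcont.continuousAt (x := y₀)) ε hεpos
  obtain ⟨δ₂, hδ₂pos, hδ₂⟩ := Metric.continuousAt_iff.1 (hqcont.continuousAt (x := A y₀)) ε hεpos
  set K := ‖(A : EuclideanSpace ℝ (Fin n) →L[ℝ] EuclideanSpace ℝ (Fin n))‖ + 1 with hK_def
  have hK1 : 1 ≤ K := by
    have := norm_nonneg (A : EuclideanSpace ℝ (Fin n) →L[ℝ] EuclideanSpace ℝ (Fin n))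
    linarith
  have hKpos : 0 < K := by linarith
  set ω := (volume (ball (0:EuclideanSpace ℝ (Fin n)) 1)).toReal with hω_def
  have hωpos : 0 < ω := ENNReal.toReal_pos (measure_ball_pos volume 0 one_pos).ne'
    measure_ball_lt_top.ne
  set δ₀ := min (min δ₁ δ₂) (min 1 (ω+1)⁻¹) with hδ₀_def
  have hδ₀pos : 0 < δ₀ := by
    apply lt_min (lt_min hδ₁pos hδ₂pos) (lt_min one_pos (by positivity))
  set c₀ := K^(α-(n:ℝ)) * (ω * ω^(1/Q)) with hc₀_def
  set c₁ := C * ω^(1/P) with hc₁_def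
  have hc₀pos : 0 < c₀ := by
    have := Real.rpow_pos_of_pos hKpos (α-(n:ℝ))
    have := Real.rpow_pos_of_pos hωpos (1/Q)
    positivity
  have hc₁pos : 0 < c₁ := by
    have := Real.rpow_pos_of_pos hωpos (1/P)
    positivity
  refine no_small (α + (n:ℝ)/Q) ((n:ℝ)/P) (c₁/c₀) δ₀ (by positivity) hδ₀pos hab ?_
  intro δ hδpos hδle
  rw [div_mul_eq_mul_div, le_div_iff₀ hc₀pos, mul_comm _ c₀]

  -- main per-δ estimate: c₀ * δ^(α+n/Q) ≤ c₁ * δ^(n/P)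
  have hδ1 : δ ≤ δ₁ := hδle.trans ((min_le_left _ _).trans (min_le_left _ _))
  have hδ2 : δ ≤ δ₂ := hδle.trans ((min_le_left _ _).trans (min_le_right _ _))
  have hδone : δ ≤ 1 := hδle.trans ((min_le_right _ _).trans (min_le_left _ _))
  have hδω : δ ≤ (ω+1)⁻¹ := hδle.trans ((min_le_right _ _).trans (min_le_right _ _))
  set B := ball y₀ δ with hB_def
  set S := ball (A y₀) δ with hS_def
  set v := volume B with hv_def
  set w := δ^n * ω with hw_def
  have hvS : volume S = v := by
    rw [hS_def, hv_def, hB_def, Measure.addHaar_ball_center volume (A y₀) δ,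
      Measure.addHaar_ball_center volume y₀ δ]
  have hvol : v = ENNReal.ofReal w := by
    rw [hw_def, hω_def, hv_def, hB_def, Measure.addHaar_ball_of_pos volume y₀ hδpos,
      finrank_euclideanSpace_fin, ENNReal.ofReal_mul (by positivity),
      ENNReal.ofReal_toReal measure_ball_lt_top.ne]
  have hw0 : 0 < w := by positivity
  have hwle : w ≤ 1 := by
    have h1 : δ^n ≤ δ := pow_le_of_le_one hδpos.le hδone hnn.ne'
    have h2 : (ω+1)⁻¹ * (ω+1) = 1 := inv_mul_cancel₀ (by positivity)
    have h3 : δ^n * ω ≤ δ * ω := mul_le_mul_of_nonneg_right h1 hωpos.le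
    nlinarith [hδpos, hωpos, hδω]
  have hv0 : v ≠ 0 := by rw [hvol]; exact (ENNReal.ofReal_pos.2 hw0).ne'
  have hvt : v ≠ ⊤ := by rw [hvol]; exact ofReal_ne_top
  have hv1 : v ≤ 1 := by rw [hvol]; exact ENNReal.ofReal_le_one.2 hwle
  set f : EuclideanSpace ℝ (Fin n) → ℝ := B.indicator (fun _ => (1:ℝ)) with hf_def
  have habs : absE f = B.indicator (fun _ => (1:ℝ≥0∞)) := by
    funext x
    simp only [absE, hf_def, Set.indicator_apply]
    by_cases hx : x ∈ B
    · simp [hx]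
    · simp [hx]
  have hmem : MemVarLp p (absE f) := by
    refine ⟨1, one_pos, one_ne_top, ?_⟩
    have hle1 : modular p (absE f) 1 ≤ v := by
      rw [habs, modular]
      have hpt : ∀ x, (B.indicator (fun _ => (1:ℝ≥0∞)) x / 1) ^ (p x)
          ≤ B.indicator (fun _ => (1:ℝ≥0∞)) x := by
        intro x
        by_cases hx : x ∈ B
        · simp [Set.indicator_of_mem hx]
        · simp only [Set.indicator_of_notMem hx]
          rw [ENNReal.zero_div, ENNReal.zero_rpow_of_pos (hppos x)]
      calc ∫⁻ x, (B.indicator (fun _ => (1:ℝ≥0∞)) x / 1) ^ (p x)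
          ≤ ∫⁻ x, B.indicator (fun _ => (1:ℝ≥0∞)) x := lintegral_mono hpt
        _ = v := by rw [lintegral_indicator measurableSet_ball, setLIntegral_one]
    exact lt_of_le_of_lt hle1 (lt_top_iff_ne_top.2 hvt)
  have hupper : luxNorm p (absE f) ≤ v ^ (1/P) := by
    rw [habs]
    refine lux_upper p B measurableSet_ball P hPpos hppos ?_ hv0 hv1 hvt
    intro x hx
    have hd : dist x y₀ < δ₁ := lt_of_lt_of_le (mem_ball.1 hx) hδ1
    have := hδ₁ hd
    rw [Real.dist_eq] at this
    have := (abs_lt.1 this).2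
    rw [hP_def]; linarith
  set κ := ENNReal.ofReal ((K*δ)^(α-(n:ℝ))) with hκ_def
  have hTlow : ∀ x ∈ S, κ * v ≤ TA α A f x := by
    intro x hx
    set z := A.symm x with hz_def
    have hAz : A z = x := A.apply_symm_apply x
    have step1 : TA α A f x = ∫⁻ y in B, ENNReal.ofReal (‖x - A y‖ ^ (-((n:ℝ) - α))) := by
      rw [TA, ← lintegral_indicator measurableSet_ball]
      congr 1; funext y
      by_cases hy : y ∈ B
      · simp [Set.indicator_of_mem hy, hf_def, show y ∈ ball y₀ δ from hy]
      · simp [Set.indicator_of_notMem hy, hf_def, show y ∉ ball y₀ δ from hy]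
    have step3 : κ * volume (B \ {z}) ≤
        ∫⁻ y in B \ {z}, ENNReal.ofReal (‖x - A y‖ ^ (-((n:ℝ) - α))) := by
      rw [← setLIntegral_const]
      apply setLIntegral_mono' (measurableSet_ball.diff (measurableSet_singleton z))
      rintro y ⟨hyB, hyz⟩
      rw [Set.mem_singleton_iff] at hyz
      have hxy : x ≠ A y := by
        intro h
        exact hyz (by rw [hz_def, h, ContinuousLinearEquiv.symm_apply_apply])
      have hpos : 0 < ‖x - A y‖ := by rwa [norm_sub_pos_iff]
      have hlt : ‖x - A y‖ ≤ K * δ := by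
        have t1 : ‖x - A y₀‖ < δ := mem_ball_iff_norm.1 hx
        have t2' : ‖y - y₀‖ < δ := mem_ball_iff_norm.1 hyB
        have t2 : ‖y₀ - y‖ < δ := by rwa [norm_sub_rev]
        have t3 : ‖A y₀ - A y‖ ≤
            ‖(A : EuclideanSpace ℝ (Fin n) →L[ℝ] EuclideanSpace ℝ (Fin n))‖ * ‖y₀ - y‖ := by
          rw [← map_sub]
          exact (A : EuclideanSpace ℝ (Fin n) →L[ℝ] EuclideanSpace ℝ (Fin n)).le_opNorm _
        have t4 : ‖A y₀ - A y‖ ≤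
            ‖(A : EuclideanSpace ℝ (Fin n) →L[ℝ] EuclideanSpace ℝ (Fin n))‖ * δ :=
          t3.trans (mul_le_mul_of_nonneg_left t2.le (norm_nonneg _))
        calc ‖x - A y‖ = ‖(x - A y₀) + (A y₀ - A y)‖ := by rw [sub_add_sub_cancel]
          _ ≤ ‖x - A y₀‖ + ‖A y₀ - A y‖ := norm_add_le _ _
          _ ≤ K * δ := by rw [hK_def]; linarith
      rw [hκ_def]
      apply ENNReal.ofReal_le_ofReal
      rw [show -((n:ℝ) - α) = α - (n:ℝ) by ring]
      exact Real.rpow_le_rpow_of_nonpos hpos hlt (by linarith)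
    have hvol' : volume (B \ {z}) = v := by
      rw [measure_diff_null (measure_singleton z)]
    calc κ * v = κ * volume (B \ {z}) := by rw [hvol']
      _ ≤ ∫⁻ y in B \ {z}, ENNReal.ofReal (‖x - A y‖ ^ (-((n:ℝ) - α))) := step3
      _ ≤ ∫⁻ y in B, ENNReal.ofReal (‖x - A y‖ ^ (-((n:ℝ) - α))) :=
          lintegral_mono_set Set.diff_subset
      _ = TA α A f x := step1.symm
  have hqS : ∀ x ∈ S, Q ≤ q x := by
    intro x hx
    have hd : dist x (A y₀) < δ₂ := lt_of_lt_of_le (mem_ball.1 hx) hδ2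
    have := hδ₂ hd
    rw [Real.dist_eq] at this
    have := (abs_lt.1 this).1
    rw [hQ_def]; linarith
  have hlow : κ * v * v ^ (1/Q) ≤ luxNorm q (TA α A f) := by
    have := lux_lower q (TA α A f) S measurableSet_ball (κ * v) Q hQpos hqS hTlow
      (hvS ▸ hv0) (hvS ▸ hv1) (hvS ▸ hvt)
    rwa [hvS] at this
  have hchain : κ * v * v ^ (1/Q) ≤ ENNReal.ofReal C * v ^ (1/P) :=
    hlow.trans ((hbound f hmem).2.trans (mul_le_mul_right hupper _))
  have hreal : (K*δ)^(α-(n:ℝ)) * w * w^(1/Q) ≤ C * w^(1/P) := by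
    rw [hκ_def, hvol, ENNReal.ofReal_rpow_of_pos (p := 1/Q) hw0,
      ENNReal.ofReal_rpow_of_pos (p := 1/P) hw0,
      ← ENNReal.ofReal_mul (by positivity),
      ← ENNReal.ofReal_mul (by positivity),
      ← ENNReal.ofReal_mul hC.le] at hchain
    exact (ENNReal.ofReal_le_ofReal_iff (by positivity)).1 hchain
  have e1 : (K*δ)^(α-(n:ℝ)) * w * w^(1/Q) = c₀ * δ^(α + (n:ℝ)/Q) := by
    rw [hw_def, hc₀_def, Real.mul_rpow (by positivity) hωpos.le,
      Real.mul_rpow hKpos.le hδpos.le, ← Real.rpow_natCast δ n,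
      ← Real.rpow_mul hδpos.le,
      show α + (n:ℝ)/Q = (α-(n:ℝ)) + ((n:ℝ) + (n:ℝ)*(1/Q)) by ring,
      Real.rpow_add hδpos, Real.rpow_add hδpos]
    ring
  have e2 : C * w^(1/P) = c₁ * δ^((n:ℝ)/P) := by
    rw [hw_def, hc₁_def, Real.mul_rpow (by positivity) hωpos.le,
      ← Real.rpow_natCast δ n, ← Real.rpow_mul hδpos.le,
      show (n:ℝ)/P = (n:ℝ)*(1/P) by ring]
    ring
  rw [← e1, ← e2]
  exact hreal


/-- if `A^N = I`, `p` continuous, `1 < p₋ ≤ p₊ < n/α` and `T_A` is bounded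
from `L^{p(·)}` to `L^{q(·)}`, then `p(Ay) = p(y)` for all `y`. -/
theorem stmt5 {n : ℕ} (α : ℝ) (hα : 0 < α) (hαn : α < n)
    (A : EuclideanSpace ℝ (Fin n) ≃L[ℝ] EuclideanSpace ℝ (Fin n))
    (N : ℕ) (hN : 0 < N) (hAN : ∀ y, (fun x => A x)^[N] y = y)
    (p q : EuclideanSpace ℝ (Fin n) → ℝ) (hpcont : Continuous p)
    (hpminus : ∃ P : ℝ, 1 < P ∧ ∀ x, P ≤ p x)
    (hpplus : ∃ P : ℝ, (∀ x, p x ≤ P) ∧ P * α < n)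
    (hq : ∀ x, 1 / q x = 1 / p x - α / n)
    (hbdd : ∃ C : ℝ, 0 < C ∧ ∀ f : EuclideanSpace ℝ (Fin n) → ℝ,
      MemVarLp p (absE f) →
        MemVarLp q (TA α A f) ∧
          luxNorm q (TA α A f) ≤ ENNReal.ofReal C * luxNorm p (absE f)) :
    ∀ y, p (A y) = p y := by
  have hle : ∀ y, p (A y) ≤ p y := key_step α hα hαn A p q hpcont hpminus hpplus hq hbdd
  intro y
  refine le_antisymm (hle y) ?_
  have iter : ∀ m : ℕ, p ((fun x => A x)^[m+1] y) ≤ p (A y) := by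
    intro m
    induction m with
    | zero => simp
    | succ k ih =>
      rw [Function.iterate_succ_apply']
      exact (hle _).trans ih
  have h2 := iter (N - 1)
  rw [Nat.sub_add_cancel hN, hAN y] at h2
  exact h2
end

section
/- Let A₁, …, A_m be invertible n×n matrices and p̃' : ℝ^n → [1, ∞) a measurable exponent satisfying p̃'(A_j x) = p̃'(x) a.e. for each j. Then for every g ∈ L^{p̃'(·)}(ℝ^n) and each j, ‖g ∘ A_j‖_{p̃'(·)} ≤ D^{1/(p̃')₋} ‖g‖_{p̃'(·)} if D > 1, and ‖g ∘ A_j‖_{p̃'(·)} ≤ ‖g‖_{p̃'(·)} if D ≤ 1, where D = max_j |det(A_j^{−1})|. -/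
open MeasureTheory Metric ENNReal

/-- Change of variables for the modular: composing with an invariant linear change of
variables multiplies the modular by `|det A⁻¹|`. -/
lemma modular_comp_eq {n : ℕ}
    (A : EuclideanSpace ℝ (Fin n) ≃L[ℝ] EuclideanSpace ℝ (Fin n))
    (p' : EuclideanSpace ℝ (Fin n) → ℝ)
    (hinv : ∀ᵐ x : EuclideanSpace ℝ (Fin n), p' (A x) = p' x)
    (f : EuclideanSpace ℝ (Fin n) → ℝ≥0∞) (lam : ℝ≥0∞) :
    modular p' (fun x => f (A x)) lam
      = ENNReal.ofReal
          |LinearMap.det ((A.symm : EuclideanSpace ℝ (Fin n) →L[ℝ] EuclideanSpace ℝ (Fin n)) :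
            EuclideanSpace ℝ (Fin n) →ₗ[ℝ] EuclideanSpace ℝ (Fin n))| * modular p' f lam := by
  let E := EuclideanSpace ℝ (Fin n)
  set L : E →ₗ[ℝ] E := ((A : E →L[ℝ] E) : E →ₗ[ℝ] E) with hL
  set Ls : E →ₗ[ℝ] E := ((A.symm : E →L[ℝ] E) : E →ₗ[ℝ] E) with hLs
  have hdet : LinearMap.det L * LinearMap.det Ls = 1 := by
    rw [← LinearMap.det_comp]
    have : L ∘ₗ Ls = LinearMap.id := by
      ext x
      simp [hL, hLs]
    rw [this, LinearMap.det_id]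
  have hA0 : LinearMap.det L ≠ 0 := left_ne_zero_of_mul_eq_one hdet
  have hinvdet : (LinearMap.det L)⁻¹ = LinearMap.det Ls := inv_eq_of_mul_eq_one_right hdet
  have hmap : Measure.map (⇑A) (volume : Measure E)
      = ENNReal.ofReal |LinearMap.det Ls| • (volume : Measure E) := by
    have h := Measure.map_linearMap_addHaar_eq_smul_addHaar (volume : Measure E) hA0
    rw [hinvdet] at h
    convert h using 2
    all_goals rfl
  calc modular p' (fun x => f (A x)) lam
      = ∫⁻ x, ((fun y => (f y / lam) ^ p' y) (A x)) := by
        unfold modular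
        refine lintegral_congr_ae ?_
        filter_upwards [hinv] with x hx
        simp [hx]
    _ = ∫⁻ y, (f y / lam) ^ p' y
          ∂(Measure.map (⇑A.toHomeomorph.toMeasurableEquiv)
            (volume : Measure (EuclideanSpace ℝ (Fin n)))) :=
        by exact (lintegral_map_equiv (fun y => (f y / lam) ^ p' y)
          A.toHomeomorph.toMeasurableEquiv).symm
    _ = ∫⁻ y, (f y / lam) ^ p' y ∂(Measure.map (⇑A) (volume : Measure (EuclideanSpace ℝ (Fin n)))) :=
        rfl
    _ = ENNReal.ofReal |LinearMap.det Ls| * modular p' f lam := by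
        rw [hmap, lintegral_smul_measure]
        rfl

/-- `‖g ∘ A_j‖_{p̃'(·)} ≤ D^{1/(p̃')₋} ‖g‖_{p̃'(·)}` (resp. `≤ ‖g‖` if `D ≤ 1`),
where `D = max_j |det A_j⁻¹|` and `p̃'` is invariant under each `A_j`. -/
theorem stmt9 {n m : ℕ}
    (A : Fin m → (EuclideanSpace ℝ (Fin n) ≃L[ℝ] EuclideanSpace ℝ (Fin n)))
    (p' : EuclideanSpace ℝ (Fin n) → ℝ) (hpmeas : Measurable p') (hp1 : ∀ x, 1 ≤ p' x)
    (hinv : ∀ j, ∀ᵐ x : EuclideanSpace ℝ (Fin n), p' (A j x) = p' x)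
    (D : ℝ)
    (hD : IsGreatest (Set.range fun j =>
      |LinearMap.det (((A j).symm : EuclideanSpace ℝ (Fin n) →L[ℝ] EuclideanSpace ℝ (Fin n)) :
        EuclideanSpace ℝ (Fin n) →ₗ[ℝ] EuclideanSpace ℝ (Fin n))|) D) :
    ∀ g : EuclideanSpace ℝ (Fin n) → ℝ, MemVarLp p' (absE g) → ∀ j : Fin m,
      (1 < D → luxNorm p' (absE (fun x => g (A j x))) ≤
        ENNReal.ofReal (D ^ (1 / essInf p' volume)) * luxNorm p' (absE g)) ∧
      (D ≤ 1 → luxNorm p' (absE (fun x => g (A j x))) ≤ luxNorm p' (absE g)) := by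
  intro g _hg j
  let E := EuclideanSpace ℝ (Fin n)
  set dj : ℝ := |LinearMap.det (((A j).symm : E →L[ℝ] E) : E →ₗ[ℝ] E)| with hdj
  have hdjD : dj ≤ D := hD.2 ⟨j, rfl⟩
  have habs : absE (fun x => g (A j x)) = fun x => absE g ((A j) x) := rfl
  have hmod : ∀ lam, modular p' (absE (fun x => g (A j x))) lam
      = ENNReal.ofReal dj * modular p' (absE g) lam := by
    intro lam
    rw [habs]
    exact modular_comp_eq (A j) p' (hinv j) (absE g) lam
  -- essential infimum facts
  have hbdd : Filter.IsBoundedUnder (· ≥ ·) (ae (volume : Measure E)) p' :=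
    Filter.isBoundedUnder_of ⟨1, fun x => hp1 x⟩
  have hvol : (volume : Measure E) ≠ 0 := by
    intro h
    have := isOpen_univ.measure_pos (volume : Measure E) Set.univ_nonempty
    rw [h] at this
    simp at this
  haveI : (ae (volume : Measure E)).NeBot := ae_neBot.2 hvol
  have hcob : Filter.IsCoboundedUnder (· ≥ ·) (ae (volume : Measure E)) p' := by
    obtain ⟨k, hk⟩ : ∃ k : ℕ, (volume : Measure E) {x : E | p' x < k} ≠ 0 := by
      by_contra h
      push_neg at h
      have h0 : (volume : Measure E) (⋃ k : ℕ, {x : E | p' x < k}) = 0 :=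
        measure_iUnion_null h
      have huniv : (⋃ k : ℕ, {x : E | p' x < (k : ℝ)}) = Set.univ := by
        ext x
        simp only [Set.mem_iUnion, Set.mem_setOf_eq, Set.mem_univ, iff_true]
        exact exists_nat_gt (p' x)
      rw [huniv] at h0
      exact hvol (Measure.measure_univ_eq_zero.mp h0)
    refine ⟨(k : ℝ), fun a ha => ?_⟩
    rw [Filter.eventually_map] at ha
    by_contra hcon
    push_neg at hcon
    refine hk (measure_mono_null (fun x hx => ?_) (ae_iff.mp ha))
    exact not_le.mpr (lt_trans hx hcon)
  set pm : ℝ := essInf p' volume with hpm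
  have hpm1 : 1 ≤ pm :=
    Filter.le_liminf_of_le hcob (Filter.Eventually.of_forall fun x => hp1 x)
  have hpm0 : 0 < pm := lt_of_lt_of_le zero_lt_one hpm1
  have hae : ∀ᵐ x : E, pm ≤ p' x := ae_essInf_le hbdd
  constructor
  · -- case 1 < D
    intro hD1
    have hDpos : (0 : ℝ) < D := lt_trans zero_lt_one hD1
    set c : ℝ≥0∞ := ENNReal.ofReal (D ^ (1 / pm)) with hc
    have hcr1 : (1 : ℝ) ≤ D ^ (1 / pm) :=
      Real.one_le_rpow hD1.le (by positivity)
    have hc1 : (1 : ℝ≥0∞) ≤ c := by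
      rw [hc, ← ENNReal.ofReal_one]
      exact ENNReal.ofReal_le_ofReal hcr1
    have hc0 : c ≠ 0 := by
      intro h; rw [h] at hc1; simp at hc1
    have hct : c ≠ ⊤ := ENNReal.ofReal_ne_top
    -- the key modular estimate
    have key : ∀ lam : ℝ≥0∞, modular p' (absE g) lam ≤ 1 →
        modular p' (absE (fun x => g (A j x))) (c * lam) ≤ 1 := by
      intro lam hlam
      rw [hmod]
      have hpt : ∀ᵐ x : E, (absE g x / (c * lam)) ^ p' x
          ≤ (absE g x / lam) ^ p' x * ENNReal.ofReal D⁻¹ := by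
        filter_upwards [hae] with x hx
        have h1 : absE g x / (c * lam) = (absE g x / lam) * c⁻¹ := by
          rw [div_eq_mul_inv, div_eq_mul_inv, ENNReal.mul_inv (Or.inl hc0) (Or.inl hct)]
          ring
        have h2 : (absE g x / (c * lam)) ^ p' x
            = (absE g x / lam) ^ p' x * c⁻¹ ^ p' x := by
          rw [h1, ENNReal.mul_rpow_of_nonneg _ _ (le_trans zero_le_one (hp1 x))]
        rw [h2]
        refine mul_le_mul_right ?_ _
        have h3 : c⁻¹ ^ p' x = c ^ (-p' x) := by
          rw [ENNReal.inv_rpow, ← ENNReal.rpow_neg]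
        have h4 : c ^ (-p' x) ≤ c ^ (-pm) :=
          ENNReal.rpow_le_rpow_of_exponent_le hc1 (by linarith)
        have h5 : c ^ (-pm) = ENNReal.ofReal D⁻¹ := by
          rw [hc, ENNReal.ofReal_rpow_of_pos (by positivity)]
          congr 1
          rw [← Real.rpow_mul hDpos.le]
          rw [show (1 / pm) * (-pm) = -1 by field_simp, Real.rpow_neg_one]
        rw [h3]
        exact h5 ▸ h4
      have hle : modular p' (absE g) (c * lam)
          ≤ ENNReal.ofReal D⁻¹ * modular p' (absE g) lam := by
        unfold modular
        calc ∫⁻ x, (absE g x / (c * lam)) ^ p' x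
            ≤ ∫⁻ x, (absE g x / lam) ^ p' x * ENNReal.ofReal D⁻¹ := lintegral_mono_ae hpt
          _ = ENNReal.ofReal D⁻¹ * ∫⁻ x, (absE g x / lam) ^ p' x := by
              rw [lintegral_mul_const' _ _ ENNReal.ofReal_ne_top, mul_comm]
      calc ENNReal.ofReal dj * modular p' (absE g) (c * lam)
          ≤ ENNReal.ofReal D * (ENNReal.ofReal D⁻¹ * modular p' (absE g) lam) :=
            mul_le_mul' (ENNReal.ofReal_le_ofReal hdjD) hle
        _ ≤ ENNReal.ofReal D * (ENNReal.ofReal D⁻¹ * 1) :=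
            mul_le_mul_right (mul_le_mul_right hlam _) _
        _ = 1 := by
            rw [mul_one, ← ENNReal.ofReal_mul hDpos.le, mul_inv_cancel₀ (ne_of_gt hDpos)]
            simp
    -- conclude on the infima
    have hdivle : luxNorm p' (absE (fun x => g (A j x))) / c
        ≤ luxNorm p' (absE g) := by
      refine le_sInf ?_
      rintro lam ⟨hlam0, hlam1⟩
      rw [ENNReal.div_le_iff_le_mul (Or.inl hc0) (Or.inl hct)]
      rw [mul_comm]
      exact sInf_le ⟨ENNReal.mul_pos hc0 (ne_of_gt hlam0), key lam hlam1⟩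
    rw [ENNReal.div_le_iff_le_mul (Or.inl hc0) (Or.inl hct)] at hdivle
    rw [mul_comm] at hdivle
    exact hdivle
  · -- case D ≤ 1
    intro hD1
    refine sInf_le_sInf ?_
    rintro lam ⟨hlam0, hlam1⟩
    refine ⟨hlam0, ?_⟩
    rw [hmod]
    calc ENNReal.ofReal dj * modular p' (absE g) lam
        ≤ 1 * 1 := mul_le_mul' (by
          rw [← ENNReal.ofReal_one]
          exact ENNReal.ofReal_le_ofReal (le_trans hdjD hD1)) hlam1
      _ = 1 := one_mul 1
end
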